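/- arXiv:2004.09613 — 4 statements merged into one kernel-verified Lean document; each statement's English description precedes it below -/
import Mathlib

section
/- Let m ≥ 1 and let (L_t)_{t∈ℕ} be a stochastic process with values in {1,…,m}, adapted to a filtration (F_t), which is almost surely nondecreasing (L_{t+1} ≥ L_t for all t). Let T = inf{t : L_t = m}. Suppose there are numbers p_1,…,p_{m−1} ∈ (0,1] such that for every t ≥ 0 and every i < m, on the event {L_t = i}, the conditional probability P[L_{t+1} > i | F_t] ≥ p_i. Then E[T] ≤ ∑_{i=1}^{m−1} P[L_0 = i] · ∑_{j=i}^{m−1} 1/p_j ≤ ∑_{j=1}^{m−1} 1/p_j. (Fitness level method for upper bounds, in fixed-target form: the last level m need not consist of global optima, so choosing m to be any target level yields a fixed-target upper bound.) -/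
open MeasureTheory

/-- First time at which the level process `L` reaches level `m` (`⊤` if this never happens),
as an extended nonnegative real. -/
noncomputable def levelHitTime {Ω : Type*} (L : ℕ → Ω → ℕ) (m : ℕ) (ω : Ω) : ENNReal :=
  sInf {r : ENNReal | ∃ t : ℕ, r = (t : ENNReal) ∧ L t ω = m}

/-- Pathwise identity: for a nondecreasing path bounded by `m`, the hitting time of `m`
equals the total time spent strictly below `m`. -/
lemma levelHitTime_eq_tsum {Ω : Type*} (L : ℕ → Ω → ℕ) (m : ℕ) (ω : Ω)
    (hmono : ∀ t, L t ω ≤ L (t + 1) ω) (hle : ∀ t, L t ω ≤ m) :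
    levelHitTime L m ω
      = ∑' t : ℕ, Set.indicator {ω' | L t ω' < m} (fun _ => (1 : ENNReal)) ω := by
  have hmono' : Monotone (fun t => L t ω) := monotone_nat_of_le_succ hmono
  by_cases hex : ∃ t, L t ω = m
  · set T := Nat.find hex with hTdef
    have hT : L T ω = m := Nat.find_spec hex
    have hiff : ∀ t, L t ω < m ↔ t < T := by
      intro t
      constructor
      · intro h
        by_contra hc
        push_neg at hc
        have : m ≤ L t ω := hT ▸ hmono' hc
        omega
      · intro h
        exact lt_of_le_of_ne (hle t) (Nat.find_min hex h)
    have hLHS : levelHitTime L m ω = (T : ENNReal) := by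
      apply le_antisymm
      · exact sInf_le ⟨T, rfl, hT⟩
      · apply le_sInf
        rintro r ⟨t, rfl, ht⟩
        exact Nat.cast_le.mpr (Nat.find_le ht)
    have hRHS : (∑' t : ℕ, Set.indicator {ω' | L t ω' < m} (fun _ => (1 : ENNReal)) ω)
        = (T : ENNReal) := by
      have hcong : ∀ t : ℕ, Set.indicator {ω' | L t ω' < m} (fun _ => (1 : ENNReal)) ω
          = if t < T then (1 : ENNReal) else 0 := by
        intro t
        simp only [Set.indicator_apply, Set.mem_setOf_eq, hiff t]
      rw [tsum_congr hcong]
      rw [tsum_eq_sum (s := Finset.range T) (by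
        intro t ht
        rw [if_neg]
        simpa using ht)]
      rw [Finset.sum_congr rfl (fun t ht => if_pos (Finset.mem_range.mp ht))]
      simp
    rw [hLHS, hRHS]
  · push_neg at hex
    have hLHS : levelHitTime L m ω = ⊤ := by
      unfold levelHitTime
      rw [sInf_eq_top]
      rintro r ⟨t, -, ht⟩
      exact absurd ht (hex t)
    have hRHS : (∑' t : ℕ, Set.indicator {ω' | L t ω' < m} (fun _ => (1 : ENNReal)) ω) = ⊤ := by
      have hcong : ∀ t : ℕ, Set.indicator {ω' | L t ω' < m} (fun _ => (1 : ENNReal)) ω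
          = 1 := by
        intro t
        have hmem : ω ∈ {ω' | L t ω' < m} := lt_of_le_of_ne (hle t) (hex t)
        exact Set.indicator_of_mem hmem _
      rw [tsum_congr hcong]
      exact ENNReal.tsum_const_eq_top_of_ne_zero one_ne_zero
    rw [hLHS, hRHS]

/-- Fitness level method for upper bounds, fixed-target form: for a nondecreasing adapted level
process `L` on `{1,…,m}` with `T = inf{t : L_t = m}`, if on the event `{L_t = i}` (for `i < m`)
the conditional probability of leaving level `i` is at least `p_i ∈ (0,1]`, then
`E[T] ≤ ∑_{i=1}^{m−1} P[L_0 = i] · ∑_{j=i}^{m−1} 1/p_j ≤ ∑_{j=1}^{m−1} 1/p_j`. -/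
theorem fitness_levels_upper
    {Ω : Type*} {m0 : MeasurableSpace Ω} (μ : Measure Ω) [IsProbabilityMeasure μ]
    (ℱ : Filtration ℕ m0) (m : ℕ) (hm : 1 ≤ m)
    (L : ℕ → Ω → ℕ) (hmeas : ∀ t, Measurable[ℱ t] (L t))
    (hrange : ∀ t ω, L t ω ∈ Finset.Icc 1 m)
    (hmono : ∀ᵐ ω ∂μ, ∀ t : ℕ, L t ω ≤ L (t + 1) ω)
    (p : ℕ → ℝ) (hp : ∀ i, 1 ≤ i → i < m → 0 < p i ∧ p i ≤ 1)
    (hlevels : ∀ t : ℕ, ∀ i, 1 ≤ i → i < m → ∀ᵐ ω ∂μ, L t ω = i →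
      p i ≤ (μ[Set.indicator {ω' | i < L (t + 1) ω'} (fun _ => (1 : ℝ))|ℱ t]) ω) :
    ∫⁻ ω, levelHitTime L m ω ∂μ
      ≤ ENNReal.ofReal (∑ i ∈ Finset.Icc 1 (m - 1),
          (μ {ω | L 0 ω = i}).toReal * ∑ j ∈ Finset.Icc i (m - 1), 1 / p j) ∧
    (∑ i ∈ Finset.Icc 1 (m - 1),
        (μ {ω | L 0 ω = i}).toReal * ∑ j ∈ Finset.Icc i (m - 1), 1 / p j)
      ≤ ∑ j ∈ Finset.Icc 1 (m - 1), 1 / p j := by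
  have hL : ∀ t, Measurable (L t) := fun t => (hmeas t).mono (ℱ.le t) le_rfl
  -- level-set measurability
  have hmeq : ∀ t j, MeasurableSet {ω | L t ω = j} :=
    fun t j => hL t (measurableSet_singleton j)
  have hmle : ∀ t j, MeasurableSet {ω | L t ω ≤ j} :=
    fun t j => hL t measurableSet_Iic
  have hmgt : ∀ t j, MeasurableSet {ω | j < L t ω} :=
    fun t j => hL t measurableSet_Ioi
  have hmlt : ∀ t, MeasurableSet {ω | L t ω < m} :=
    fun t => hL t measurableSet_Iio
  -- Step 1: the conditional probability bound, integrated over {L t = j}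
  have haux1 : ∀ t j, 1 ≤ j → j < m →
      p j * (μ {ω | L t ω = j}).toReal
        ≤ (μ ({ω | L t ω = j} ∩ {ω' | j < L (t + 1) ω'})).toReal := by
    intro t j hj1 hj2
    set s := {ω | L t ω = j} with hs_def
    set A := {ω' | j < L (t + 1) ω'} with hA_def
    have hsF : MeasurableSet[ℱ t] s := hmeas t (measurableSet_singleton j)
    have hs : MeasurableSet s := ℱ.le t _ hsF
    have hA : MeasurableSet A := hmgt (t + 1) j
    have hf : Integrable (A.indicator fun _ => (1 : ℝ)) μ :=
      (integrable_const 1).indicator hA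
    have h1 : ∫ ω in s, A.indicator (fun _ => (1 : ℝ)) ω ∂μ = (μ (s ∩ A)).toReal := by
      rw [setIntegral_indicator hA, setIntegral_const]
      simp [Measure.real]
    have h2 : ∫ ω in s, (μ[A.indicator fun _ => (1 : ℝ)|ℱ t]) ω ∂μ
        = ∫ ω in s, A.indicator (fun _ => (1 : ℝ)) ω ∂μ :=
      setIntegral_condExp (ℱ.le t) hf hsF
    have h3 : p j * (μ s).toReal ≤ ∫ ω in s, (μ[A.indicator fun _ => (1 : ℝ)|ℱ t]) ω ∂μ := by
      have hae : ∀ᵐ ω ∂(μ.restrict s), p j ≤ (μ[A.indicator fun _ => (1 : ℝ)|ℱ t]) ω := by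
        rw [ae_restrict_iff' hs]
        filter_upwards [hlevels t j hj1 hj2] with ω h hmem using h hmem
      calc p j * (μ s).toReal = ∫ _ω in s, p j ∂μ := by
            rw [setIntegral_const]; simp [mul_comm, Measure.real]
        _ ≤ ∫ ω in s, (μ[A.indicator fun _ => (1 : ℝ)|ℱ t]) ω ∂μ :=
            setIntegral_mono_ae_restrict
              (integrableOn_const (measure_ne_top μ s))
              integrable_condExp.integrableOn hae
    rw [← h1, ← h2]
    exact h3
  -- Step 2: measure inequality using monotonicity
  have haux2 : ∀ t j,
      μ {ω | L (t + 1) ω ≤ j} + μ ({ω | L t ω = j} ∩ {ω' | j < L (t + 1) ω'})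
        ≤ μ {ω | L t ω ≤ j} := by
    intro t j
    have hdisj : Disjoint {ω | L (t + 1) ω ≤ j}
        ({ω | L t ω = j} ∩ {ω' | j < L (t + 1) ω'}) := by
      rw [Set.disjoint_left]
      rintro ω h1 ⟨-, h2⟩
      exact lt_irrefl j (lt_of_lt_of_le h2 h1)
    rw [← measure_union hdisj ((hmeq t j).inter (hmgt (t + 1) j))]
    apply measure_mono_ae
    filter_upwards [hmono] with ω hω
    rintro (h | ⟨h1, -⟩)
    · exact le_trans (hω t) h
    · exact le_of_eq h1
  -- Step 3: partition of {L t ≤ j} into level sets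
  have haux3 : ∀ t j, (μ {ω | L t ω ≤ j}).toReal
      = ∑ i ∈ Finset.Icc 1 j, (μ {ω | L t ω = i}).toReal := by
    intro t j
    have hset : {ω | L t ω ≤ j} = ⋃ i ∈ Finset.Icc 1 j, {ω | L t ω = i} := by
      ext ω
      simp only [Set.mem_setOf_eq, Set.mem_iUnion, Finset.mem_Icc, exists_prop]
      constructor
      · intro h
        exact ⟨L t ω, ⟨(Finset.mem_Icc.mp (hrange t ω)).1, h⟩, rfl⟩
      · rintro ⟨i, ⟨-, hij⟩, h⟩
        omega
    have hd : (↑(Finset.Icc 1 j) : Set ℕ).PairwiseDisjoint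
        (fun i => {ω | L t ω = i}) := by
      intro a _ b _ hab
      rw [Function.onFun, Set.disjoint_left]
      rintro ω h1 h2
      exact hab (by simp only [Set.mem_setOf_eq] at h1 h2; omega)
    rw [hset, measure_biUnion_finset hd (fun i _ => hmeq t i),
      ENNReal.toReal_sum (fun i _ => measure_ne_top μ _)]
  have hltm : ∀ t, {ω | L t ω < m} = {ω | L t ω ≤ m - 1} := by
    intro t; ext ω; simp only [Set.mem_setOf_eq]; omega
  -- potential function
  set Φ : ℕ → ℝ :=
    fun t => ∑ j ∈ Finset.Icc 1 (m - 1), (1 / p j) * (μ {ω | L t ω ≤ j}).toReal with hΦ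
  have hΦnonneg : ∀ t, 0 ≤ Φ t := by
    intro t
    apply Finset.sum_nonneg
    intro j hj
    obtain ⟨hj1, hj2⟩ := Finset.mem_Icc.mp hj
    have hpj := (hp j hj1 (by omega)).1
    positivity
  -- Step 4: drift of the potential
  have haux4 : ∀ t, Φ (t + 1) + (μ {ω | L t ω < m}).toReal ≤ Φ t := by
    intro t
    have key : ∀ j ∈ Finset.Icc 1 (m - 1),
        (1 / p j) * (μ {ω | L (t + 1) ω ≤ j}).toReal + (μ {ω | L t ω = j}).toReal
          ≤ (1 / p j) * (μ {ω | L t ω ≤ j}).toReal := by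
      intro j hj
      obtain ⟨hj1, hj2⟩ := Finset.mem_Icc.mp hj
      have hjm : j < m := by omega
      have hpj := hp j hj1 hjm
      have h1 := haux1 t j hj1 hjm
      have h2 : (μ {ω | L (t + 1) ω ≤ j}).toReal
          + (μ ({ω | L t ω = j} ∩ {ω' | j < L (t + 1) ω'})).toReal
          ≤ (μ {ω | L t ω ≤ j}).toReal := by
        rw [← ENNReal.toReal_add (measure_ne_top μ _) (measure_ne_top μ _)]
        exact ENNReal.toReal_mono (measure_ne_top μ _) (haux2 t j)
      have h3 : (μ {ω | L (t + 1) ω ≤ j}).toReal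
          + p j * (μ {ω | L t ω = j}).toReal ≤ (μ {ω | L t ω ≤ j}).toReal := by
        linarith
      have hpne : p j ≠ 0 := ne_of_gt hpj.1
      have h4 := mul_le_mul_of_nonneg_left h3 (le_of_lt (one_div_pos.mpr hpj.1))
      calc (1 / p j) * (μ {ω | L (t + 1) ω ≤ j}).toReal + (μ {ω | L t ω = j}).toReal
          = (1 / p j) * ((μ {ω | L (t + 1) ω ≤ j}).toReal
              + p j * (μ {ω | L t ω = j}).toReal) := by
            field_simp
        _ ≤ (1 / p j) * (μ {ω | L t ω ≤ j}).toReal := h4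
    have hsum := Finset.sum_le_sum key
    rw [Finset.sum_add_distrib] at hsum
    have hpart : (μ {ω | L t ω < m}).toReal
        = ∑ j ∈ Finset.Icc 1 (m - 1), (μ {ω | L t ω = j}).toReal := by
      rw [hltm t, haux3 t (m - 1)]
    rw [hpart]
    exact hsum
  -- Step 5: accumulated bound
  have haux5 : ∀ N, (∑ t ∈ Finset.range N, (μ {ω | L t ω < m}).toReal) + Φ N ≤ Φ 0 := by
    intro N
    induction N with
    | zero => simp
    | succ N ih =>
      rw [Finset.sum_range_succ]
      have := haux4 N
      linarith
  -- the stated first-moment expression equals Φ 0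
  have hE : (∑ i ∈ Finset.Icc 1 (m - 1),
      (μ {ω | L 0 ω = i}).toReal * ∑ j ∈ Finset.Icc i (m - 1), 1 / p j) = Φ 0 := by
    show _ = ∑ j ∈ Finset.Icc 1 (m - 1), 1 / p j * (μ {ω | L 0 ω ≤ j}).toReal
    have : ∀ j ∈ Finset.Icc 1 (m - 1),
        (1 / p j) * (μ {ω | L 0 ω ≤ j}).toReal
          = ∑ i ∈ Finset.Icc 1 j, (1 / p j) * (μ {ω | L 0 ω = i}).toReal := by
      intro j _
      rw [haux3 0 j, Finset.mul_sum]
    rw [Finset.sum_congr rfl this]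
    rw [Finset.sum_comm' (s := Finset.Icc 1 (m - 1)) (t := fun j => Finset.Icc 1 j)
      (t' := Finset.Icc 1 (m - 1)) (s' := fun i => Finset.Icc i (m - 1))
      (by intro j i; simp only [Finset.mem_Icc]; omega)]
    apply Finset.sum_congr rfl
    intro i _
    rw [Finset.mul_sum]
    apply Finset.sum_congr rfl
    intro j _
    ring
  constructor
  · -- main bound
    have hTae : ∀ᵐ ω ∂μ, levelHitTime L m ω
        = ∑' t : ℕ, Set.indicator {ω' | L t ω' < m} (fun _ => (1 : ENNReal)) ω := by
      filter_upwards [hmono] with ω hω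
      exact levelHitTime_eq_tsum L m ω hω (fun t => (Finset.mem_Icc.mp (hrange t ω)).2)
    rw [lintegral_congr_ae hTae,
      lintegral_tsum (fun t => (measurable_const.indicator (hmlt t)).aemeasurable)]
    have hint : ∀ t : ℕ,
        (∫⁻ ω, Set.indicator {ω' | L t ω' < m} (fun _ => (1 : ENNReal)) ω ∂μ)
          = μ {ω | L t ω < m} := by
      intro t
      rw [lintegral_indicator (hmlt t)]
      simp
    rw [tsum_congr hint, hE]
    rw [ENNReal.tsum_eq_iSup_sum]
    apply iSup_le
    intro s
    obtain ⟨N, hN⟩ := s.exists_nat_subset_range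
    calc ∑ t ∈ s, μ {ω | L t ω < m}
        ≤ ∑ t ∈ Finset.range N, μ {ω | L t ω < m} :=
          Finset.sum_le_sum_of_subset hN
      _ ≤ ENNReal.ofReal (Φ 0) := by
          rw [ENNReal.le_ofReal_iff_toReal_le
            (ENNReal.sum_ne_top.mpr (fun t _ => measure_ne_top μ _)) (hΦnonneg 0),
            ENNReal.toReal_sum (fun t _ => measure_ne_top μ _)]
          have h5 := haux5 N
          have h0 := hΦnonneg N
          linarith
  · -- second inequality
    have hsum1 : ∑ i ∈ Finset.Icc 1 (m - 1), (μ {ω | L 0 ω = i}).toReal ≤ 1 := by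
      rw [← haux3 0 (m - 1)]
      calc (μ {ω | L 0 ω ≤ m - 1}).toReal ≤ (1 : ENNReal).toReal :=
            ENNReal.toReal_mono ENNReal.one_ne_top prob_le_one
        _ = 1 := ENNReal.toReal_one
    have hGnonneg : 0 ≤ ∑ j ∈ Finset.Icc 1 (m - 1), 1 / p j := by
      apply Finset.sum_nonneg
      intro j hj
      obtain ⟨hj1, hj2⟩ := Finset.mem_Icc.mp hj
      have := (hp j hj1 (by omega)).1
      positivity
    calc ∑ i ∈ Finset.Icc 1 (m - 1),
          (μ {ω | L 0 ω = i}).toReal * ∑ j ∈ Finset.Icc i (m - 1), 1 / p j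
        ≤ ∑ i ∈ Finset.Icc 1 (m - 1),
            (μ {ω | L 0 ω = i}).toReal * ∑ j ∈ Finset.Icc 1 (m - 1), 1 / p j := by
          apply Finset.sum_le_sum
          intro i hi
          obtain ⟨hi1, hi2⟩ := Finset.mem_Icc.mp hi
          apply mul_le_mul_of_nonneg_left _ ENNReal.toReal_nonneg
          apply Finset.sum_le_sum_of_subset_of_nonneg
          · apply Finset.Icc_subset_Icc_left hi1
          · intro j hj _
            obtain ⟨hj1, hj2⟩ := Finset.mem_Icc.mp hj
            have := (hp j hj1 (by omega)).1
            positivity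
      _ = (∑ i ∈ Finset.Icc 1 (m - 1), (μ {ω | L 0 ω = i}).toReal)
            * ∑ j ∈ Finset.Icc 1 (m - 1), 1 / p j := (Finset.sum_mul _ _ _).symm
      _ ≤ 1 * ∑ j ∈ Finset.Icc 1 (m - 1), 1 / p j :=
          mul_le_mul_of_nonneg_right hsum1 hGnonneg
      _ = ∑ j ∈ Finset.Icc 1 (m - 1), 1 / p j := one_mul _
end

section
/- Let m ≥ 1 and let (L_t)_{t∈ℕ} be a stochastic process with values in {1,…,m}, adapted to a filtration (F_t), which is almost surely nondecreasing. Let T = inf{t : L_t = m}. Suppose there are numbers s_1,…,s_{m−1} > 0, numbers γ_{i,j} ≥ 0 for 1 ≤ i < j ≤ m with ∑_{j=i+1}^m γ_{i,j} = 1 for each i < m, and some χ ∈ [0,1] with γ_{i,j} ≤ χ · ∑_{l=j}^m γ_{i,l} for all 1 ≤ i < j < m, and with (1−χ)·s_i ≤ s_{i+1} for all 1 ≤ i ≤ m−2, such that for every t ≥ 0 and all 1 ≤ i < j ≤ m, on the event {L_t = i}, the conditional probability P[L_{t+1} = j | F_t] ≥ s_i · γ_{i,j}. Then E[T] ≤ ∑_{i=1}^{m−1}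 P[L_0 = i] · (1/s_i + χ · ∑_{j=i+1}^{m−1} 1/s_j). -/
open MeasureTheory

/-- Potential function for the refined fitness level method. -/
noncomputable def Hlvl (m : ℕ) (s : ℕ → ℝ) (χ : ℝ) (j : ℕ) : ℝ :=
  if j < m then 1 / s j + χ * ∑ l ∈ Finset.Ico (j + 1) m, 1 / s l else 0

section Det
variable {m : ℕ} {s : ℕ → ℝ} {χ : ℝ}

lemma Hlvl_nonneg (hs : ∀ i, 1 ≤ i → i < m → 0 < s i) (hχ0 : 0 ≤ χ)
    (j : ℕ) (hj : 1 ≤ j) : 0 ≤ Hlvl m s χ j := by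
  unfold Hlvl
  split
  · rename_i hjm
    have h1 : 0 < 1 / s j := by
      have := hs j hj hjm; positivity
    have h2 : 0 ≤ ∑ l ∈ Finset.Ico (j + 1) m, 1 / s l := by
      apply Finset.sum_nonneg
      intro l hl
      rw [Finset.mem_Ico] at hl
      have := hs l (by omega) hl.2
      positivity
    nlinarith
  · exact le_refl _

lemma Hlvl_succ_le (hs : ∀ i, 1 ≤ i → i < m → 0 < s i) (hχ0 : 0 ≤ χ) (hχ1 : χ ≤ 1)
    (hsmono : ∀ i, 1 ≤ i → i ≤ m - 2 → (1 - χ) * s i ≤ s (i + 1))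
    (i : ℕ) (h1 : 1 ≤ i) (him : i + 1 ≤ m) :
    Hlvl m s χ (i + 1) ≤ Hlvl m s χ i := by
  rcases eq_or_lt_of_le him with he | hlt
  · have hZ : Hlvl m s χ (i + 1) = 0 := by
      unfold Hlvl; rw [if_neg (by omega)]
    rw [hZ]
    exact Hlvl_nonneg hs hχ0 i h1
  · -- i + 1 < m
    have hi : i < m := by omega
    have hsi := hs i h1 hi
    have hsi1 := hs (i + 1) (by omega) hlt
    have hsm := hsmono i h1 (by omega)
    have hsplit : ∑ l ∈ Finset.Ico (i + 1) m, 1 / s l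
        = 1 / s (i + 1) + ∑ l ∈ Finset.Ico (i + 2) m, 1 / s l :=
      Finset.sum_eq_sum_Ico_succ_bot hlt _
    have hA : Hlvl m s χ i
        = 1 / s i + χ * (1 / s (i + 1) + ∑ l ∈ Finset.Ico (i + 2) m, 1 / s l) := by
      unfold Hlvl; rw [if_pos hi, hsplit]
    have hB : Hlvl m s χ (i + 1) = 1 / s (i + 1) + χ * ∑ l ∈ Finset.Ico (i + 2) m, 1 / s l := by
      unfold Hlvl; rw [if_pos hlt]
    rw [hA, hB]
    have hdiv : (1 - χ) / s (i + 1) ≤ 1 / s i := by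
      rw [div_le_div_iff₀ hsi1 hsi]
      nlinarith
    have heq : (1 - χ) / s (i + 1) = (1 - χ) * (1 / s (i + 1)) := by ring
    nlinarith [heq ▸ hdiv]

lemma Hlvl_anti (hs : ∀ i, 1 ≤ i → i < m → 0 < s i) (hχ0 : 0 ≤ χ) (hχ1 : χ ≤ 1)
    (hsmono : ∀ i, 1 ≤ i → i ≤ m - 2 → (1 - χ) * s i ≤ s (i + 1))
    (i j : ℕ) (h1 : 1 ≤ i) (hij : i ≤ j) (hjm : j ≤ m) :
    Hlvl m s χ j ≤ Hlvl m s χ i := by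
  induction j, hij using Nat.le_induction with
  | base => exact le_refl _
  | succ k hik ih =>
      exact le_trans (Hlvl_succ_le hs hχ0 hχ1 hsmono k (by omega) hjm) (ih (by omega))

lemma Hlvl_key {γ : ℕ → ℕ → ℝ}
    (hs : ∀ i, 1 ≤ i → i < m → 0 < s i)
    (hγsum : ∀ i, 1 ≤ i → i < m → ∑ j ∈ Finset.Icc (i + 1) m, γ i j = 1)
    (hγχ : ∀ i j, 1 ≤ i → i < j → j < m → γ i j ≤ χ * ∑ l ∈ Finset.Icc j m, γ i l)
    (i : ℕ) (h1 : 1 ≤ i) (him : i < m) :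
    1 ≤ s i * ∑ j ∈ Finset.Icc (i + 1) m, γ i j * (Hlvl m s χ i - Hlvl m s χ j) := by
  have hsi := hs i h1 him
  -- rewrite each difference
  have hcj : ∀ j ∈ Finset.Icc (i + 1) m,
      γ i j * (Hlvl m s χ i - Hlvl m s χ j)
        = γ i j * (1 / s i) + χ * (γ i j * ∑ l ∈ Finset.Ico (i + 1) j, 1 / s l)
          - γ i j * (if j < m then (1 - χ) * (1 / s j) else 0) := by
    intro j hj
    rw [Finset.mem_Icc] at hj
    obtain ⟨hj1, hj2⟩ := hj
    by_cases hjm : j < m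
    · have hsplit : ∑ l ∈ Finset.Ico (i + 1) m, 1 / s l
          = ∑ l ∈ Finset.Ico (i + 1) j, 1 / s l + ∑ l ∈ Finset.Ico j m, 1 / s l :=
        (Finset.sum_Ico_consecutive _ hj1 hj2).symm
      have hbot : ∑ l ∈ Finset.Ico j m, 1 / s l
          = 1 / s j + ∑ l ∈ Finset.Ico (j + 1) m, 1 / s l :=
        Finset.sum_eq_sum_Ico_succ_bot hjm _
      unfold Hlvl
      rw [if_pos him, if_pos hjm, if_pos hjm, hsplit, hbot]
      ring
    · have hjm' : j = m := by omega
      rw [hjm']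
      unfold Hlvl
      rw [if_pos him, if_neg (lt_irrefl m), if_neg (lt_irrefl m)]
      ring
  rw [Finset.sum_congr rfl hcj]
  rw [Finset.sum_sub_distrib, Finset.sum_add_distrib, ← Finset.sum_mul, ← Finset.mul_sum]
  rw [hγsum i h1 him, one_mul]
  -- the "last" sum
  have hlast : ∑ j ∈ Finset.Icc (i + 1) m, γ i j * (if j < m then (1 - χ) * (1 / s j) else 0)
      = ∑ j ∈ Finset.Ico (i + 1) m, γ i j * ((1 - χ) * (1 / s j)) := by
    have hIccIco : Finset.Icc (i + 1) m = Finset.Ico (i + 1) (m + 1) := by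
      rw [Finset.Ico_add_one_right_eq_Icc]
    rw [hIccIco, Finset.sum_Ico_succ_top (by omega), if_neg (lt_irrefl m), mul_zero, add_zero]
    apply Finset.sum_congr rfl
    intro j hj
    rw [Finset.mem_Ico] at hj
    rw [if_pos hj.2]
  -- swap the double sum
  have hswap : ∑ j ∈ Finset.Icc (i + 1) m, (γ i j * ∑ l ∈ Finset.Ico (i + 1) j, 1 / s l)
      = ∑ l ∈ Finset.Ico (i + 1) m, (∑ j ∈ Finset.Icc (l + 1) m, γ i j) * (1 / s l) := by
    have hms : ∀ j, γ i j * ∑ l ∈ Finset.Ico (i + 1) j, 1 / s l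
        = ∑ l ∈ Finset.Ico (i + 1) j, γ i j * (1 / s l) := fun j => Finset.mul_sum ..
    simp only [hms]
    rw [Finset.sum_comm' (t' := Finset.Ico (i + 1) m) (s' := fun l => Finset.Icc (l + 1) m)]
    · apply Finset.sum_congr rfl
      intro l _
      rw [Finset.sum_mul]
    · intro j l
      simp only [Finset.mem_Icc, Finset.mem_Ico]
      omega
  rw [hlast, hswap]
  -- termwise comparison
  have hterm : ∑ j ∈ Finset.Ico (i + 1) m, γ i j * ((1 - χ) * (1 / s j))
      ≤ χ * ∑ l ∈ Finset.Ico (i + 1) m, (∑ j ∈ Finset.Icc (l + 1) m, γ i j) * (1 / s l) := by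
    rw [Finset.mul_sum]
    apply Finset.sum_le_sum
    intro l hl
    rw [Finset.mem_Ico] at hl
    have hsl := hs l (by omega) hl.2
    have hsl' : 0 ≤ 1 / s l := by positivity
    have hγl : γ i l ≤ χ * ∑ j ∈ Finset.Icc l m, γ i j := hγχ i l h1 (by omega) hl.2
    have hsplit2 : ∑ j ∈ Finset.Icc l m, γ i j = γ i l + ∑ j ∈ Finset.Icc (l + 1) m, γ i j := by
      have h1' : Finset.Icc l m = Finset.Ico l (m + 1) := by rw [Finset.Ico_add_one_right_eq_Icc]
      have h2' : Finset.Icc (l + 1) m = Finset.Ico (l + 1) (m + 1) := by rw [Finset.Ico_add_one_right_eq_Icc]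
      rw [h1', h2']
      exact Finset.sum_eq_sum_Ico_succ_bot (by omega) _
    rw [hsplit2] at hγl
    have hkey : (1 - χ) * γ i l ≤ χ * ∑ j ∈ Finset.Icc (l + 1) m, γ i j := by nlinarith
    calc γ i l * ((1 - χ) * (1 / s l)) = ((1 - χ) * γ i l) * (1 / s l) := by ring
      _ ≤ (χ * ∑ j ∈ Finset.Icc (l + 1) m, γ i j) * (1 / s l) :=
          mul_le_mul_of_nonneg_right hkey hsl'
      _ = χ * ((∑ j ∈ Finset.Icc (l + 1) m, γ i j) * (1 / s l)) := by ring
  have hfin : 1 / s i ≤ 1 / s i + χ * ∑ l ∈ Finset.Ico (i + 1) m,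
      (∑ j ∈ Finset.Icc (l + 1) m, γ i j) * (1 / s l)
      - ∑ j ∈ Finset.Ico (i + 1) m, γ i j * ((1 - χ) * (1 / s j)) := by linarith
  calc (1 : ℝ) = s i * (1 / s i) := by field_simp
    _ ≤ _ := mul_le_mul_of_nonneg_left hfin hsi.le

end Det

section Prob
variable {Ω : Type*} {m0 : MeasurableSpace Ω} (μ : Measure Ω) [IsProbabilityMeasure μ]

/-- Decomposition of an integral of a function of two finite-range measurable maps. -/
lemma integral_double_decomp (m : ℕ) (u v : Ω → ℕ)
    (hu : Measurable u) (hv : Measurable v)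
    (hur : ∀ ω, u ω ∈ Finset.Icc 1 m) (hvr : ∀ ω, v ω ∈ Finset.Icc 1 m)
    (g : ℕ → ℕ → ℝ) :
    ∫ ω, g (u ω) (v ω) ∂μ
      = ∑ i ∈ Finset.Icc 1 m, ∑ j ∈ Finset.Icc 1 m,
          g i j * (μ ({ω | u ω = i} ∩ {ω | v ω = j})).toReal := by
  classical
  have hpt : ∀ ω, g (u ω) (v ω)
      = ∑ i ∈ Finset.Icc 1 m, ∑ j ∈ Finset.Icc 1 m,
          Set.indicator ({ω' | u ω' = i} ∩ {ω' | v ω' = j}) (fun _ => g i j) ω := by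
    intro ω
    have hind : ∀ i j, Set.indicator ({ω' | u ω' = i} ∩ {ω' | v ω' = j}) (fun _ => g i j) ω
        = if u ω = i ∧ v ω = j then g i j else 0 := by
      intro i j
      simp [Set.indicator_apply, Set.mem_inter_iff, Set.mem_setOf_eq]
    simp only [hind]
    rw [Finset.sum_eq_single (u ω)]
    · rw [Finset.sum_eq_single (v ω)]
      · simp
      · intro j _ hj; exact if_neg fun hc => hj hc.2.symm
      · intro h; exact absurd (hvr ω) h
    · intro i _ hi
      apply Finset.sum_eq_zero
      intro j _
      exact if_neg fun hc => hi hc.1.symm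
    · intro h; exact absurd (hur ω) h
  have hmeasset : ∀ i j, MeasurableSet ({ω' | u ω' = i} ∩ {ω' | v ω' = j}) := fun i j =>
    (hu (measurableSet_singleton i)).inter (hv (measurableSet_singleton j))
  calc ∫ ω, g (u ω) (v ω) ∂μ
      = ∫ ω, ∑ i ∈ Finset.Icc 1 m, ∑ j ∈ Finset.Icc 1 m,
          Set.indicator ({ω' | u ω' = i} ∩ {ω' | v ω' = j}) (fun _ => g i j) ω ∂μ := by
        exact integral_congr_ae (Filter.Eventually.of_forall hpt)
    _ = ∑ i ∈ Finset.Icc 1 m, ∑ j ∈ Finset.Icc 1 m,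
          ∫ ω, Set.indicator ({ω' | u ω' = i} ∩ {ω' | v ω' = j}) (fun _ => g i j) ω ∂μ := by
        rw [integral_finset_sum]
        · apply Finset.sum_congr rfl
          intro i _
          rw [integral_finset_sum]
          intro j _
          exact (integrable_const _).indicator (hmeasset i j)
        · intro i _
          apply integrable_finset_sum
          intro j _
          exact (integrable_const _).indicator (hmeasset i j)
    _ = _ := by
        apply Finset.sum_congr rfl; intro i _
        apply Finset.sum_congr rfl; intro j _
        rw [integral_indicator_const _ (hmeasset i j), smul_eq_mul, mul_comm, measureReal_def]

/-- Splitting the measure of a level set of `u` along the values of `v`. -/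
lemma measure_split (m : ℕ) (u v : Ω → ℕ)
    (hu : Measurable u) (hv : Measurable v)
    (hvr : ∀ ω, v ω ∈ Finset.Icc 1 m) (i : ℕ) :
    (μ {ω | u ω = i}).toReal
      = ∑ j ∈ Finset.Icc 1 m, (μ ({ω | u ω = i} ∩ {ω | v ω = j})).toReal := by
  rw [← ENNReal.toReal_sum (fun j _ => measure_ne_top μ _)]
  congr 1
  rw [← measure_biUnion_finset]
  · congr 1
    ext ω
    simp only [Set.mem_iUnion, Set.mem_inter_iff, Set.mem_setOf_eq]
    constructor
    · intro h
      exact ⟨v ω, hvr ω, h, rfl⟩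
    · rintro ⟨j, _, h, _⟩
      exact h
  · intro a _ b _ hab
    apply Set.disjoint_left.2
    rintro ω ⟨_, ha⟩ ⟨_, hb⟩
    exact hab (ha ▸ hb ▸ rfl)
  · intro j _
    exact (hu (measurableSet_singleton i)).inter (hv (measurableSet_singleton j))

end Prob

/-- Refined fitness level method for upper bounds (Sudholt), fixed-target form: for a
nondecreasing adapted level process `L` on `{1,…,m}` with `T = inf{t : L_t = m}`,
probabilities `γ_{i,j} ≥ 0` summing to `1` over `j ∈ {i+1,…,m}`, a constant `χ ∈ [0,1]` with
`γ_{i,j} ≤ χ·∑_{l=j}^m γ_{i,l}` for `j < m` and `(1−χ)·s_i ≤ s_{i+1}`, and, on the event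
`{L_t = i}`, conditional transition probabilities `P[L_{t+1} = j | F_t] ≥ s_i·γ_{i,j}`,
one has `E[T] ≤ ∑_{i=1}^{m−1} P[L_0 = i]·(1/s_i + χ·∑_{j=i+1}^{m−1} 1/s_j)`. -/
theorem fitness_levels_upper_refined
    {Ω : Type*} {m0 : MeasurableSpace Ω} (μ : Measure Ω) [IsProbabilityMeasure μ]
    (ℱ : Filtration ℕ m0) (m : ℕ) (hm : 1 ≤ m)
    (L : ℕ → Ω → ℕ) (hmeas : ∀ t, Measurable[ℱ t] (L t))
    (hrange : ∀ t ω, L t ω ∈ Finset.Icc 1 m)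
    (hmono : ∀ᵐ ω ∂μ, ∀ t : ℕ, L t ω ≤ L (t + 1) ω)
    (s : ℕ → ℝ) (hs : ∀ i, 1 ≤ i → i < m → 0 < s i)
    (γ : ℕ → ℕ → ℝ)
    (hγnonneg : ∀ i j, 1 ≤ i → i < j → j ≤ m → 0 ≤ γ i j)
    (hγsum : ∀ i, 1 ≤ i → i < m → ∑ j ∈ Finset.Icc (i + 1) m, γ i j = 1)
    (χ : ℝ) (hχ0 : 0 ≤ χ) (hχ1 : χ ≤ 1)
    (hγχ : ∀ i j, 1 ≤ i → i < j → j < m →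
      γ i j ≤ χ * ∑ l ∈ Finset.Icc j m, γ i l)
    (hsmono : ∀ i, 1 ≤ i → i ≤ m - 2 → (1 - χ) * s i ≤ s (i + 1))
    (htrans : ∀ t : ℕ, ∀ i j, 1 ≤ i → i < j → j ≤ m → ∀ᵐ ω ∂μ, L t ω = i →
      s i * γ i j ≤ (μ[Set.indicator {ω' | L (t + 1) ω' = j} (fun _ => (1 : ℝ))|ℱ t]) ω) :
    ∫⁻ ω, levelHitTime L m ω ∂μ
      ≤ ENNReal.ofReal (∑ i ∈ Finset.Icc 1 (m - 1),
          (μ {ω | L 0 ω = i}).toReal *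
            (1 / s i + χ * ∑ j ∈ Finset.Icc (i + 1) (m - 1), 1 / s j)) := by
  classical
  set H : ℕ → ℝ := Hlvl m s χ with hH
  have hLmeas : ∀ t, Measurable (L t) := fun t => (hmeas t).mono (ℱ.le t) le_rfl
  have hrange' : ∀ t ω, 1 ≤ L t ω ∧ L t ω ≤ m := by
    intro t ω; have := hrange t ω; rwa [Finset.mem_Icc] at this
  -- transition probability lower bound
  have hP1 : ∀ (t i j : ℕ), 1 ≤ i → i < j → j ≤ m →
      s i * γ i j * (μ {ω | L t ω = i}).toReal
        ≤ (μ ({ω | L t ω = i} ∩ {ω | L (t + 1) ω = j})).toReal := by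
    intro t i j h1 hij hjm
    have hA : MeasurableSet[ℱ t] {ω | L t ω = i} := hmeas t (measurableSet_singleton i)
    have hAm : MeasurableSet {ω | L t ω = i} := ℱ.le t _ hA
    have hB : MeasurableSet {ω' | L (t + 1) ω' = j} := hLmeas (t + 1) (measurableSet_singleton j)
    have hint : Integrable (Set.indicator {ω' | L (t + 1) ω' = j} (fun _ => (1 : ℝ))) μ :=
      (integrable_const 1).indicator hB
    have e1 : ∫ ω in {ω | L t ω = i},
          (μ[Set.indicator {ω' | L (t + 1) ω' = j} (fun _ => (1 : ℝ))|ℱ t]) ω ∂μ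
        = ∫ ω in {ω | L t ω = i},
            Set.indicator {ω' | L (t + 1) ω' = j} (fun _ => (1 : ℝ)) ω ∂μ :=
      setIntegral_condExp (ℱ.le t) hint hA
    have e2 : ∫ ω in {ω | L t ω = i},
          Set.indicator {ω' | L (t + 1) ω' = j} (fun _ => (1 : ℝ)) ω ∂μ
        = (μ ({ω | L t ω = i} ∩ {ω | L (t + 1) ω = j})).toReal := by
      rw [setIntegral_indicator hB, setIntegral_const, smul_eq_mul, mul_one, measureReal_def]
    have e3 : s i * γ i j * (μ {ω | L t ω = i}).toReal
        ≤ ∫ ω in {ω | L t ω = i},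
            (μ[Set.indicator {ω' | L (t + 1) ω' = j} (fun _ => (1 : ℝ))|ℱ t]) ω ∂μ := by
      have hb : ∀ᵐ ω ∂(μ.restrict {ω | L t ω = i}), s i * γ i j
          ≤ (μ[Set.indicator {ω' | L (t + 1) ω' = j} (fun _ => (1 : ℝ))|ℱ t]) ω := by
        rw [ae_restrict_iff' hAm]
        filter_upwards [htrans t i j h1 hij hjm] with ω h hω using h hω
      have hmono' := setIntegral_mono_ae_restrict
        (integrableOn_const)
        integrable_condExp.integrableOn hb
      rwa [setIntegral_const, smul_eq_mul, mul_comm] at hmono'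
    linarith
  -- impossible transitions
  have hP0 : ∀ (t i j : ℕ), j < i →
      μ ({ω | L t ω = i} ∩ {ω | L (t + 1) ω = j}) = 0 := by
    intro t i j hji
    apply measure_mono_null _ (ae_iff.mp hmono)
    rintro ω ⟨h1, h2⟩
    simp only [Set.mem_setOf_eq] at h1 h2 ⊢
    intro hall
    have := hall t
    omega
  -- pointwise nonnegativity of the potential
  have hH0 : ∀ t ω, 0 ≤ H (L t ω) := fun t ω =>
    Hlvl_nonneg hs hχ0 _ (hrange' t ω).1
  have hEnonneg : ∀ t, 0 ≤ ∫ ω, H (L t ω) ∂μ := fun t => integral_nonneg (hH0 t)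
  -- conversion of the "not done" measure into an integral
  have hcint : ∀ t, ∫ ω, (if L t ω < m then (1 : ℝ) else 0) ∂μ
      = (μ {ω | L t ω ≠ m}).toReal := by
    intro t
    have hset : {ω | L t ω ≠ m} = {ω | L t ω < m} := by
      ext ω; have := hrange' t ω
      simp only [Set.mem_setOf_eq]
      omega
    have hpt : ∀ ω, (if L t ω < m then (1 : ℝ) else 0)
        = Set.indicator {ω' | L t ω' < m} (fun _ => (1 : ℝ)) ω := by
      intro ω
      simp [Set.indicator_apply, Set.mem_setOf_eq]
    have hms : MeasurableSet {ω | L t ω < m} := hLmeas t measurableSet_Iio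
    rw [integral_congr_ae (Filter.Eventually.of_forall hpt),
      integral_indicator_const _ hms, smul_eq_mul, mul_one, hset, measureReal_def]
  -- the drift step
  have hstep : ∀ t : ℕ, (μ {ω | L t ω ≠ m}).toReal + ∫ ω, H (L (t + 1) ω) ∂μ
      ≤ ∫ ω, H (L t ω) ∂μ := by
    intro t
    rw [← hcint t]
    set Q : ℕ → ℕ → ℝ :=
      fun i j => (μ ({ω | L t ω = i} ∩ {ω | L (t + 1) ω = j})).toReal with hQ
    have d1 : ∫ ω, (if L t ω < m then (1 : ℝ) else 0) ∂μ
        = ∑ i ∈ Finset.Icc 1 m, ∑ j ∈ Finset.Icc 1 m,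
            (if i < m then (1 : ℝ) else 0) * Q i j :=
      integral_double_decomp μ m (L t) (L (t + 1)) (hLmeas t) (hLmeas (t + 1))
        (hrange t) (hrange (t + 1)) (fun i _ => if i < m then (1 : ℝ) else 0)
    have d2 : ∫ ω, H (L (t + 1) ω) ∂μ
        = ∑ i ∈ Finset.Icc 1 m, ∑ j ∈ Finset.Icc 1 m,
            H j * Q i j :=
      integral_double_decomp μ m (L t) (L (t + 1)) (hLmeas t) (hLmeas (t + 1))
        (hrange t) (hrange (t + 1)) (fun _ j => H j)
    have d3 : ∫ ω, H (L t ω) ∂μ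
        = ∑ i ∈ Finset.Icc 1 m, ∑ j ∈ Finset.Icc 1 m,
            H i * Q i j :=
      integral_double_decomp μ m (L t) (L (t + 1)) (hLmeas t) (hLmeas (t + 1))
        (hrange t) (hrange (t + 1)) (fun i _ => H i)
    have hqnonneg : ∀ i j, 0 ≤ Q i j := fun i j => by
      simp only [hQ]; exact ENNReal.toReal_nonneg
    have hq0 : ∀ i j, j < i → Q i j = 0 := by
      intro i j hj
      simp only [hQ]
      rw [hP0 t i j hj, ENNReal.toReal_zero]
    rw [d1, d2, d3, ← Finset.sum_add_distrib]
    apply Finset.sum_le_sum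
    intro i hi
    rw [Finset.mem_Icc] at hi
    rw [← Finset.sum_add_distrib]
    by_cases him : i < m
    · -- the interesting case
      simp only [if_pos him, one_mul]
      have hpsplit : (μ {ω | L t ω = i}).toReal = ∑ j ∈ Finset.Icc 1 m, Q i j := by
        simp only [hQ]
        exact measure_split μ m (L t) (L (t + 1)) (hLmeas t) (hLmeas (t + 1)) (hrange (t + 1)) i
      have hsuf : (μ {ω | L t ω = i}).toReal
          ≤ ∑ j ∈ Finset.Icc 1 m, (H i * Q i j - H j * Q i j) := by
        have hsplitJ : ∀ f : ℕ → ℝ, ∑ j ∈ Finset.Icc 1 m, f j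
            = ∑ j ∈ Finset.Ico 1 (i + 1), f j + ∑ j ∈ Finset.Icc (i + 1) m, f j := by
          intro f
          have e1 : Finset.Icc 1 m = Finset.Ico 1 (m + 1) := (Finset.Ico_add_one_right_eq_Icc 1 m).symm
          have e2 : Finset.Icc (i + 1) m = Finset.Ico (i + 1) (m + 1) :=
            (Finset.Ico_add_one_right_eq_Icc (i + 1) m).symm
          rw [e1, e2, Finset.sum_Ico_consecutive f (by omega) (by omega)]
        have hfirst : ∑ j ∈ Finset.Ico 1 (i + 1), (H i * Q i j - H j * Q i j) = 0 := by
          apply Finset.sum_eq_zero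
          intro j hj
          rw [Finset.mem_Ico] at hj
          by_cases hji : j = i
          · rw [hji]; ring
          · rw [hq0 i j (by omega)]; ring
        have hsecond : (μ {ω | L t ω = i}).toReal
            ≤ ∑ j ∈ Finset.Icc (i + 1) m, (H i * Q i j - H j * Q i j) := by
          have hkey := Hlvl_key hs hγsum hγχ i hi.1 him
          have hexpand : (s i * ∑ j ∈ Finset.Icc (i + 1) m, γ i j * (H i - H j))
                * (μ {ω | L t ω = i}).toReal
              = ∑ j ∈ Finset.Icc (i + 1) m,
                  (H i - H j) * (s i * γ i j * (μ {ω | L t ω = i}).toReal) := by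
            rw [Finset.mul_sum, Finset.sum_mul]
            apply Finset.sum_congr rfl
            intro j _
            ring
          calc (μ {ω | L t ω = i}).toReal
              = 1 * (μ {ω | L t ω = i}).toReal := (one_mul _).symm
            _ ≤ (s i * ∑ j ∈ Finset.Icc (i + 1) m, γ i j * (H i - H j))
                  * (μ {ω | L t ω = i}).toReal :=
                mul_le_mul_of_nonneg_right hkey ENNReal.toReal_nonneg
            _ = ∑ j ∈ Finset.Icc (i + 1) m,
                  (H i - H j) * (s i * γ i j * (μ {ω | L t ω = i}).toReal) := hexpand
            _ ≤ ∑ j ∈ Finset.Icc (i + 1) m, (H i - H j) * Q i j := by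
                apply Finset.sum_le_sum
                intro j hj
                rw [Finset.mem_Icc] at hj
                have hcoeff : 0 ≤ H i - H j := by
                  have := Hlvl_anti hs hχ0 hχ1 hsmono i j hi.1 (by omega) hj.2
                  rw [hH]; linarith
                have hple : s i * γ i j * (μ {ω | L t ω = i}).toReal ≤ Q i j := by
                  simp only [hQ]
                  exact hP1 t i j hi.1 (by omega) hj.2
                exact mul_le_mul_of_nonneg_left hple hcoeff
            _ = ∑ j ∈ Finset.Icc (i + 1) m, (H i * Q i j - H j * Q i j) := by
                apply Finset.sum_congr rfl
                intro j _
                ring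
        calc (μ {ω | L t ω = i}).toReal
            ≤ ∑ j ∈ Finset.Icc (i + 1) m, (H i * Q i j - H j * Q i j) := hsecond
          _ = ∑ j ∈ Finset.Ico 1 (i + 1), (H i * Q i j - H j * Q i j)
              + ∑ j ∈ Finset.Icc (i + 1) m, (H i * Q i j - H j * Q i j) := by
              rw [hfirst, zero_add]
          _ = ∑ j ∈ Finset.Icc 1 m, (H i * Q i j - H j * Q i j) :=
              (hsplitJ fun j => H i * Q i j - H j * Q i j).symm
      rw [Finset.sum_sub_distrib] at hsuf
      have hq' : ∑ j ∈ Finset.Icc 1 m, (Q i j + H j * Q i j)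
          = ∑ j ∈ Finset.Icc 1 m, Q i j + ∑ j ∈ Finset.Icc 1 m, H j * Q i j :=
        Finset.sum_add_distrib
      rw [hq', ← hpsplit]
      linarith
    · -- i = m : everything stays at m
      have him' : i = m := by omega
      apply Finset.sum_le_sum
      intro j hj
      rw [Finset.mem_Icc] at hj
      rw [if_neg him, zero_mul, zero_add]
      rcases eq_or_ne j m with hjm | hjm
      · exact le_of_eq (by rw [hjm, him'])
      · have h0 : Q i j = 0 := hq0 i j (by omega)
        rw [h0, mul_zero, mul_zero]
  -- telescoping
  have htele : ∀ N : ℕ,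
      (∑ t ∈ Finset.range N, (μ {ω | L t ω ≠ m}).toReal) + ∫ ω, H (L N ω) ∂μ
        ≤ ∫ ω, H (L 0 ω) ∂μ := by
    intro N
    induction N with
    | zero => simp
    | succ n ih =>
        rw [Finset.sum_range_succ]
        have := hstep n
        linarith
  -- identify the initial expectation with the stated bound
  have hE0 : ∫ ω, H (L 0 ω) ∂μ
      = ∑ i ∈ Finset.Icc 1 (m - 1),
          (μ {ω | L 0 ω = i}).toReal *
            (1 / s i + χ * ∑ j ∈ Finset.Icc (i + 1) (m - 1), 1 / s j) := by
    have d : ∫ ω, H (L 0 ω) ∂μ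
        = ∑ i ∈ Finset.Icc 1 m, ∑ j ∈ Finset.Icc 1 m,
            H i * (μ ({ω | L 0 ω = i} ∩ {ω | L 1 ω = j})).toReal :=
      integral_double_decomp μ m (L 0) (L 1) (hLmeas 0) (hLmeas 1)
        (hrange 0) (hrange 1) (fun i _ => H i)
    have dcollapse : ∀ i ∈ Finset.Icc 1 m,
        ∑ j ∈ Finset.Icc 1 m, H i * (μ ({ω | L 0 ω = i} ∩ {ω | L 1 ω = j})).toReal
          = H i * (μ {ω | L 0 ω = i}).toReal := by
      intro i _
      rw [← Finset.mul_sum, ← measure_split μ m (L 0) (L 1) (hLmeas 0) (hLmeas 1) (hrange 1) i]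
    rw [d, Finset.sum_congr rfl dcollapse]
    rw [show Finset.Icc 1 m = Finset.Ico 1 (m + 1) from (Finset.Ico_add_one_right_eq_Icc 1 m).symm,
      Finset.sum_Ico_succ_top (by omega)]
    have hHm : H m = 0 := by
      rw [hH]; unfold Hlvl; rw [if_neg (lt_irrefl m)]
    rw [hHm, zero_mul, add_zero]
    rw [show Finset.Icc 1 (m - 1) = Finset.Ico 1 m from by
      rw [← Finset.Ico_add_one_right_eq_Icc]; congr 1; omega]
    apply Finset.sum_congr rfl
    intro i hi
    rw [Finset.mem_Ico] at hi
    have hIccIco : Finset.Icc (i + 1) (m - 1) = Finset.Ico (i + 1) m := by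
      rw [← Finset.Ico_add_one_right_eq_Icc]; congr 1; omega
    rw [hH]
    unfold Hlvl
    rw [if_pos hi.2, hIccIco, mul_comm]
  -- hitting-time bound pointwise
  have hmeasne : ∀ t, MeasurableSet {ω | L t ω ≠ m} := fun t =>
    (hLmeas t (measurableSet_singleton m)).compl
  have hT : ∀ ω, levelHitTime L m ω
      ≤ ∑' t : ℕ, Set.indicator {ω' | L t ω' ≠ m} (fun _ => (1 : ENNReal)) ω := by
    intro ω
    by_cases hex : ∃ t, L t ω = m
    · have h1 : levelHitTime L m ω ≤ ((Nat.find hex : ℕ) : ENNReal) :=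
        sInf_le ⟨Nat.find hex, rfl, Nat.find_spec hex⟩
      refine h1.trans ?_
      have h2 : ((Nat.find hex : ℕ) : ENNReal) = ∑ t ∈ Finset.range (Nat.find hex), 1 := by
        simp
      rw [h2]
      calc ∑ t ∈ Finset.range (Nat.find hex), (1 : ENNReal)
          = ∑ t ∈ Finset.range (Nat.find hex),
              Set.indicator {ω' | L t ω' ≠ m} (fun _ => (1 : ENNReal)) ω := by
            apply Finset.sum_congr rfl
            intro t ht
            rw [Finset.mem_range] at ht
            exact (Set.indicator_of_mem (Nat.find_min hex ht)
              (fun _ => (1 : ENNReal))).symm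
        _ ≤ _ := ENNReal.sum_le_tsum _
    · push_neg at hex
      have hall : ∀ t : ℕ, Set.indicator {ω' | L t ω' ≠ m} (fun _ => (1 : ENNReal)) ω = 1 :=
        fun t => Set.indicator_of_mem (hex t) (fun _ => (1 : ENNReal))
      have htop : ∑' t : ℕ, Set.indicator {ω' | L t ω' ≠ m} (fun _ => (1 : ENNReal)) ω = ⊤ := by
        rw [tsum_congr hall]
        exact ENNReal.tsum_const_eq_top_of_ne_zero one_ne_zero
      rw [htop]
      exact le_top
  -- final chain
  have hRHSnonneg : 0 ≤ ∑ i ∈ Finset.Icc 1 (m - 1),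
      (μ {ω | L 0 ω = i}).toReal *
        (1 / s i + χ * ∑ j ∈ Finset.Icc (i + 1) (m - 1), 1 / s j) := hE0 ▸ hEnonneg 0
  calc ∫⁻ ω, levelHitTime L m ω ∂μ
      ≤ ∫⁻ ω, ∑' t : ℕ, Set.indicator {ω' | L t ω' ≠ m} (fun _ => (1 : ENNReal)) ω ∂μ :=
        lintegral_mono hT
    _ = ∑' t : ℕ, ∫⁻ ω, Set.indicator {ω' | L t ω' ≠ m} (fun _ => (1 : ENNReal)) ω ∂μ :=
        lintegral_tsum fun t => (measurable_const.indicator (hmeasne t)).aemeasurable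
    _ = ∑' t : ℕ, μ {ω | L t ω ≠ m} := by
        refine tsum_congr fun t => ?_
        rw [lintegral_indicator_const (hmeasne t), one_mul]
    _ ≤ ENNReal.ofReal (∑ i ∈ Finset.Icc 1 (m - 1),
          (μ {ω | L 0 ω = i}).toReal *
            (1 / s i + χ * ∑ j ∈ Finset.Icc (i + 1) (m - 1), 1 / s j)) := by
        rw [ENNReal.tsum_eq_iSup_nat]
        apply iSup_le
        intro N
        have hfin : (∑ t ∈ Finset.range N, μ {ω | L t ω ≠ m}) ≠ ⊤ :=
          (ENNReal.sum_lt_top.2 fun t _ => measure_lt_top μ _).ne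
        rw [ENNReal.le_ofReal_iff_toReal_le hfin hRHSnonneg,
          ENNReal.toReal_sum (fun t _ => measure_ne_top μ _)]
        have h3 : (∑ t ∈ Finset.range N, (μ {ω | L t ω ≠ m}).toReal)
            ≤ ∫ ω, H (L 0 ω) ∂μ := by
          have h1 := htele N
          have h2 := hEnonneg N
          linarith
        rw [hE0] at h3
        exact h3
end

section
/- Consider the (1+1) EA with mutation probability p ∈ (0,1) on the LeadingOnes function on {0,1}^n with uniformly random initialization. For every t ≥ 0 and all integers i, j with 0 ≤ i < j ≤ n, the conditional probability that LO(x_{t+1}) = j, given that LO(x_t) = i and that LO(x_{t+1}) > i, equals 2^{i−j} if j < n and equals 2^{i−j+1} if j = n. -/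
open MeasureTheory Finset

/-- The LeadingOnes fitness: the number of leading one-bits of `x`. -/
def leadingOnes (n : ℕ) (x : Fin n → Bool) : ℕ :=
  (Finset.univ.filter (fun i : Fin n => ∀ j ≤ i, x j = true)).card

/-- Standard bit mutation: the probability that flipping each bit of `x` independently with
probability `p` produces `y`. -/
noncomputable def sbmProb (n : ℕ) (p : ℝ) (x y : Fin n → Bool) : ℝ :=
  p ^ hammingDist x y * (1 - p) ^ (n - hammingDist x y)

/-- Transition probability of an elitist (1+1) algorithm with fitness `f` (to be maximized)
and mutation distribution `q`: from `a`, the offspring `y ~ q a ·` is accepted iff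
`f y ≥ f a`; otherwise the algorithm stays at `a`. -/
noncomputable def eaKernel (n : ℕ) (f : (Fin n → Bool) → ℕ)
    (q : (Fin n → Bool) → (Fin n → Bool) → ℝ) (a b : Fin n → Bool) : ℝ :=
  (if f a ≤ f b then q a b else 0) +
    (if b = a then ∑ y ∈ Finset.univ.filter (fun y => f y < f a), q a y else 0)

/-- `x` is a time-homogeneous Markov chain on the finite state space `S` with initial
distribution `init` and transition probabilities `K`, characterized via its
finite-dimensional distributions. -/
def IsMarkovProcess {Ω S : Type*} [MeasurableSpace Ω] [MeasurableSpace S] [Fintype S]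
    (μ : Measure Ω) (x : ℕ → Ω → S) (init : S → ℝ) (K : S → S → ℝ) : Prop :=
  (∀ t, Measurable (x t)) ∧
  (∀ a : S, μ {ω | x 0 ω = a} = ENNReal.ofReal (init a)) ∧
  (∀ t : ℕ, ∀ a : ℕ → S,
    μ {ω | ∀ s ≤ t + 1, x s ω = a s}
      = μ {ω | ∀ s ≤ t, x s ω = a s} * ENNReal.ofReal (K (a t) (a (t + 1))))

/-- First time at which the process `x` reaches a state satisfying `good`
(`⊤` if this never happens). -/
noncomputable def hitTime {Ω S : Type*} (x : ℕ → Ω → S) (good : S → Prop) (ω : Ω) : ENNReal :=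
  sInf {r : ENNReal | ∃ t : ℕ, r = (t : ENNReal) ∧ good (x t ω)}


set_option linter.unusedSectionVars false




section LO
variable {n : ℕ}

lemma leadingOnes_le (x : Fin n → Bool) : leadingOnes n x ≤ n := by
  classical
  calc (Finset.univ.filter (fun i : Fin n => ∀ j ≤ i, x j = true)).card
      ≤ (univ : Finset (Fin n)).card := Finset.card_filter_le _ _
    _ = n := by simp

lemma card_filter_val_lt (m : ℕ) (hm : m ≤ n) :
    (univ.filter (fun i : Fin n => (i : ℕ) < m)).card = m := by
  classical
  have h : (univ.filter (fun i : Fin n => (i : ℕ) < m))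
      = (Finset.range m).attachFin (fun a ha => lt_of_lt_of_le (Finset.mem_range.mp ha) hm) := by
    ext i
    simp [Finset.mem_attachFin]
  rw [h, Finset.card_attachFin, Finset.card_range]

lemma leadingOnes_spec (x : Fin n → Bool) :
    (∀ k : Fin n, (k : ℕ) < leadingOnes n x → x k = true) ∧
      ∀ h : leadingOnes n x < n, x ⟨leadingOnes n x, h⟩ = false := by
  classical
  by_cases hall : ∀ k : Fin n, x k = true
  · have h1 : leadingOnes n x = n := by
      unfold leadingOnes
      rw [Finset.filter_true_of_mem (fun i _ => fun j _ => hall j)]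
      simp
    constructor
    · intro k _; exact hall k
    · intro h; rw [h1] at h; exact absurd h (lt_irrefl n)
  · push_neg at hall
    have hne : (univ.filter (fun k : Fin n => x k = false)).Nonempty := by
      obtain ⟨k, hk⟩ := hall
      exact ⟨k, by simp [Bool.not_eq_true] at hk ⊢; exact hk⟩
    set m := (univ.filter (fun k : Fin n => x k = false)).min' hne with hm
    have hmem : x m = false := by
      have := Finset.min'_mem _ hne
      simpa using this
    have hmin : ∀ k : Fin n, x k = false → m ≤ k := by
      intro k hk
      exact Finset.min'_le _ _ (by simpa using hk)
    have hlt : ∀ k : Fin n, k < m → x k = true := by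
      intro k hk
      by_contra hc
      exact absurd (hmin k (by simpa using hc)) (not_le.mpr hk)
    have hLO : leadingOnes n x = (m : ℕ) := by
      unfold leadingOnes
      have hset : (univ.filter (fun i : Fin n => ∀ j ≤ i, x j = true))
          = univ.filter (fun i : Fin n => (i : ℕ) < (m : ℕ)) := by
        ext i
        simp only [Finset.mem_filter, Finset.mem_univ, true_and]
        constructor
        · intro h
          by_contra hc
          push_neg at hc
          have : m ≤ i := by exact_mod_cast hc
          have := h m this
          rw [hmem] at this; exact Bool.false_ne_true this
        · intro h j hj
          exact hlt j (lt_of_le_of_lt hj (by exact_mod_cast h))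
      rw [hset, card_filter_val_lt _ (le_of_lt m.isLt)]
    constructor
    · intro k hk
      exact hlt k (by rw [hLO] at hk; exact_mod_cast hk)
    · intro h
      have : (⟨leadingOnes n x, h⟩ : Fin n) = m := by
        apply Fin.ext; simp [hLO]
      rw [this]; exact hmem

lemma leadingOnes_eq_iff (x : Fin n → Bool) (j : ℕ) (hj : j ≤ n) :
    leadingOnes n x = j ↔
      ((∀ k : Fin n, (k : ℕ) < j → x k = true) ∧ ∀ h : j < n, x ⟨j, h⟩ = false) := by
  constructor
  · rintro rfl; exact leadingOnes_spec x
  · rintro ⟨h1, h2⟩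
    obtain ⟨g1, g2⟩ := leadingOnes_spec x
    by_contra hne
    rcases lt_or_gt_of_ne hne with hlt | hgt
    · -- leadingOnes < j ≤ n
      have hn : leadingOnes n x < n := lt_of_lt_of_le hlt hj
      have := h1 ⟨leadingOnes n x, hn⟩ (by simpa using hlt)
      rw [g2 hn] at this; exact Bool.false_ne_true this
    · have hn : j < n := lt_of_lt_of_le hgt (leadingOnes_le x)
      have := g1 ⟨j, hn⟩ (by simpa using hgt)
      rw [h2 hn] at this; exact Bool.false_ne_true this

lemma lt_leadingOnes_iff (x : Fin n → Bool) (i : ℕ) (hi : i < n) :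
    i < leadingOnes n x ↔ ∀ k : Fin n, (k : ℕ) ≤ i → x k = true := by
  obtain ⟨g1, g2⟩ := leadingOnes_spec x
  constructor
  · intro h k hk
    exact g1 k (lt_of_le_of_lt hk h)
  · intro h
    by_contra hc
    push_neg at hc
    have hn : leadingOnes n x < n := lt_of_le_of_lt hc hi
    have := h ⟨leadingOnes n x, hn⟩ (by simpa using hc)
    rw [g2 hn] at this; exact Bool.false_ne_true this

end LO




section Alg
variable {n : ℕ}

lemma sum_prod_bool (Ok : Fin n → Bool → Prop) [∀ k v, Decidable (Ok k v)]
    (c : Fin n → Bool → ℝ) :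
    ∑ a : Fin n → Bool, (if (∀ k, Ok k (a k)) then ∏ k, c k (a k) else 0)
      = ∏ k, ((if Ok k false then c k false else 0) + (if Ok k true then c k true else 0)) := by
  have h1 : ∀ a : Fin n → Bool, (if (∀ k, Ok k (a k)) then ∏ k, c k (a k) else 0)
      = ∏ k, (if Ok k (a k) then c k (a k) else 0) := by
    intro a
    by_cases h : ∀ k, Ok k (a k)
    · rw [if_pos h]
      exact Finset.prod_congr rfl (fun k _ => by rw [if_pos (h k)])
    · rw [if_neg h]
      push_neg at h
      obtain ⟨k, hk⟩ := h
      exact (Finset.prod_eq_zero (mem_univ k) (by rw [if_neg hk])).symm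
  simp only [h1]
  rw [← Fintype.prod_sum (fun k v => if Ok k v then c k v else 0)]
  exact Finset.prod_congr rfl (fun k _ => by rw [Fintype.sum_bool]; ring)

lemma sbmProb_nonneg {p : ℝ} (hp0 : 0 ≤ p) (hp1 : p ≤ 1) (a b : Fin n → Bool) :
    0 ≤ sbmProb n p a b :=
  mul_nonneg (pow_nonneg hp0 _) (pow_nonneg (by linarith) _)

lemma hammingDist_eq (a b : Fin n → Bool) :
    hammingDist a b = (univ.filter (fun k => ¬ a k = b k)).card := rfl

lemma sbmProb_eq_prod (p : ℝ) (a b : Fin n → Bool) :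
    sbmProb n p a b = ∏ k, (if a k = b k then 1 - p else p) := by
  classical
  rw [Finset.prod_ite (fun _ => (1:ℝ) - p) (fun _ => p), Finset.prod_const, Finset.prod_const]
  have hcard : (univ.filter (fun k => a k = b k)).card
      = n - hammingDist a b := by
    have := Finset.card_filter_add_card_filter_not
      (s := (univ : Finset (Fin n))) (p := fun k => a k = b k)
    rw [hammingDist_eq]
    simp only [Finset.card_univ, Fintype.card_fin] at this
    omega
  rw [hcard, ← hammingDist_eq]
  rw [sbmProb, mul_comm]

/-- distance is preserved by coordinatewise xor-type maps -/
lemma sum_sbm (p : ℝ) (a : Fin n → Bool) (Ok : Fin n → Bool → Prop) [∀ k v, Decidable (Ok k v)] :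
    ∑ b : Fin n → Bool, (if (∀ k, Ok k (b k)) then sbmProb n p a b else 0)
      = ∏ k, ((if Ok k false then (if a k = false then 1 - p else p) else 0)
          + (if Ok k true then (if a k = true then 1 - p else p) else 0)) := by
  have : ∀ b : Fin n → Bool, (if (∀ k, Ok k (b k)) then sbmProb n p a b else 0)
      = (if (∀ k, Ok k (b k)) then ∏ k, (if a k = b k then 1 - p else p) else 0) := by
    intro b; rw [sbmProb_eq_prod]
  simp only [this]
  exact sum_prod_bool Ok (fun k v => if a k = v then 1 - p else p)

lemma prod_range_const_of (m M : ℕ) (f : ℕ → ℝ) (c : ℝ)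
    (h : ∀ k, m ≤ k → k < M → f k = c) : ∏ k ∈ Finset.Ico m M, f k = c ^ (M - m) := by
  rw [Finset.prod_congr rfl (fun k hk => h k (Finset.mem_Ico.mp hk).1 (Finset.mem_Ico.mp hk).2),
    Finset.prod_const, Nat.card_Ico]

lemma prod_split (i j : ℕ) (hij : i < j) (hjn : j ≤ n) (f : ℕ → ℝ) (A B C : ℝ)
    (hA : ∀ k < i, f k = A) (hB : f i = B) (hC : ∀ k, i < k → k < j → f k = C) :
    ∏ k ∈ Finset.range n, f k = A ^ i * B * C ^ (j - i - 1) * ∏ k ∈ Finset.Ico j n, f k := by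
  have h1 : Finset.range n = Finset.Ico 0 n := by rw [Finset.range_eq_Ico]
  rw [h1]
  rw [← Finset.prod_Ico_consecutive f (Nat.zero_le j) hjn]
  rw [← Finset.prod_Ico_consecutive f (Nat.zero_le i) (le_of_lt hij)]
  rw [← Finset.prod_Ico_consecutive f (Nat.le_succ i) hij]
  rw [prod_range_const_of 0 i f A (fun k _ hk => hA k hk)]
  rw [prod_range_const_of (i+1) j f C (fun k hk1 hk2 => hC k hk1 hk2)]
  have h2 : ∏ k ∈ Finset.Ico i (i+1), f k = B := by
    have : Finset.Ico i (i+1) = {i} := by rw [Finset.Ico_add_one_right_eq_Icc, Finset.Icc_self]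
    rw [this, Finset.prod_singleton, hB]
  rw [h2]
  have e1 : i - 0 = i := by omega
  have e2 : j - (i+1) = j - i - 1 := by omega
  rw [e1, e2]; ring

end Alg




section Markov
variable {Ω S : Type*} [MeasurableSpace Ω] [MeasurableSpace S] [Fintype S]
  [MeasurableSingletonClass S] [DecidableEq S]
  {μ : Measure Ω} {x : ℕ → Ω → S} {init : S → ℝ} {K : S → S → ℝ}

lemma cyl_measurable (hx : ∀ t, Measurable (x t)) (t : ℕ) (π : ℕ → S) :
    MeasurableSet {ω | ∀ s ≤ t, x s ω = π s} := by
  have h : {ω | ∀ s ≤ t, x s ω = π s} = ⋂ s ∈ Set.Iic t, (x s) ⁻¹' {π s} := by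
    ext ω; simp [Set.mem_iInter]
  rw [h]
  exact MeasurableSet.biInter (Set.to_countable _)
    (fun s _ => (hx s) (measurableSet_singleton _))

lemma state_measurable (hx : ∀ t, Measurable (x t)) (t : ℕ) (a : S) :
    MeasurableSet {ω | x t ω = a} := (hx t) (measurableSet_singleton _)

lemma pair_measure (h : IsMarkovProcess μ x init K) (t : ℕ) (a b : S) :
    μ {ω | x t ω = a ∧ x (t + 1) ω = b}
      = μ {ω | x t ω = a} * ENNReal.ofReal (K a b) := by
  classical
  obtain ⟨hx, _, hstep⟩ := h
  set π : (Fin t → S) → ℕ → S := fun v s => if hs : s < t then v ⟨s, hs⟩ else if s = t then a else b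
    with hπ
  have hπlt : ∀ v, ∀ s (hs : s < t), π v s = v ⟨s, hs⟩ := fun v s hs => by simp [hπ, hs]
  have hπt : ∀ v, π v t = a := fun v => by simp [hπ]
  have hπt1 : ∀ v, π v (t + 1) = b := fun v => by
    simp only [hπ]
    rw [dif_neg (by omega), if_neg (by omega)]
  have hdisj : ∀ u, t ≤ u → (Set.PairwiseDisjoint (↑(univ : Finset (Fin t → S)))
      (fun v => {ω | ∀ s ≤ u, x s ω = π v s})) := by
    intro u hu v _ w _ hvw
    refine Set.disjoint_left.mpr (fun ω h1 h2 => hvw ?_)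
    funext k
    have e1 := h1 (k : ℕ) (le_trans (le_of_lt k.isLt) hu)
    have e2 := h2 (k : ℕ) (le_trans (le_of_lt k.isLt) hu)
    rw [hπlt v _ k.isLt] at e1
    rw [hπlt w _ k.isLt] at e2
    rw [Fin.eta] at e1 e2
    rw [← e1, ← e2]
  have hdec1 : {ω | x t ω = a} = ⋃ v ∈ (univ : Finset (Fin t → S)), {ω | ∀ s ≤ t, x s ω = π v s} := by
    ext ω
    simp only [Set.mem_setOf_eq, Set.mem_iUnion, Finset.mem_univ, exists_prop, true_and]
    constructor
    · intro hω
      refine ⟨fun s => x s ω, fun s hs => ?_⟩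
      rcases lt_or_eq_of_le hs with hs' | hs'
      · simp only [hπ]; rw [dif_pos hs']
      · simp only [hπ]; rw [dif_neg (by omega), if_pos hs']; rw [hs']; exact hω
    · rintro ⟨v, hv⟩
      have := hv t le_rfl
      rwa [hπt] at this
  have hdec2 : {ω | x t ω = a ∧ x (t+1) ω = b}
      = ⋃ v ∈ (univ : Finset (Fin t → S)), {ω | ∀ s ≤ t + 1, x s ω = π v s} := by
    ext ω
    simp only [Set.mem_setOf_eq, Set.mem_iUnion, Finset.mem_univ, exists_prop, true_and]
    constructor
    · rintro ⟨h1, h2⟩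
      refine ⟨fun s => x s ω, fun s hs => ?_⟩
      have : s < t ∨ s = t ∨ s = t + 1 := by omega
      rcases this with hs' | hs' | hs'
      · simp only [hπ]; rw [dif_pos hs']
      · simp only [hπ]; rw [dif_neg (by omega), if_pos hs']; rw [hs']; exact h1
      · simp only [hπ]; rw [dif_neg (by omega), if_neg (by omega)]; rw [hs']; exact h2
    · rintro ⟨v, hv⟩
      constructor
      · have := hv t (by omega); rwa [hπt] at this
      · have := hv (t+1) le_rfl; rwa [hπt1] at this
  rw [hdec2, measure_biUnion_finset (hdisj (t+1) (by omega))
    (fun v _ => cyl_measurable hx (t+1) (π v))]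
  have hterm : ∀ v : Fin t → S, μ {ω | ∀ s ≤ t + 1, x s ω = π v s}
      = μ {ω | ∀ s ≤ t, x s ω = π v s} * ENNReal.ofReal (K a b) := by
    intro v
    rw [hstep t (π v), hπt, hπt1]
  simp only [hterm]
  rw [← Finset.sum_mul]
  congr 1
  rw [hdec1, measure_biUnion_finset (hdisj t le_rfl) (fun v _ => cyl_measurable hx t (π v))]

lemma level_measure (h : IsMarkovProcess μ x init K) (t : ℕ)
    (Q : S → S → Prop) [∀ a b, Decidable (Q a b)] :
    μ {ω | Q (x t ω) (x (t + 1) ω)}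
      = ∑ c : S × S, (if Q c.1 c.2 then
          μ {ω | x t ω = c.1} * ENNReal.ofReal (K c.1 c.2) else 0) := by
  classical
  have hdec : {ω | Q (x t ω) (x (t + 1) ω)}
      = ⋃ c ∈ (univ : Finset (S × S)).filter (fun c => Q c.1 c.2),
          {ω | x t ω = c.1 ∧ x (t + 1) ω = c.2} := by
    ext ω
    simp only [Set.mem_setOf_eq, Set.mem_iUnion, Finset.mem_filter, Finset.mem_univ, true_and,
      exists_prop]
    constructor
    · intro hQ
      exact ⟨(x t ω, x (t+1) ω), hQ, rfl, rfl⟩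
    · rintro ⟨c, hc, h1, h2⟩
      rw [← h1, ← h2] at hc; exact hc
  have hdisj : Set.PairwiseDisjoint
      (↑((univ : Finset (S × S)).filter (fun c => Q c.1 c.2)))
      (fun c : S × S => {ω | x t ω = c.1 ∧ x (t + 1) ω = c.2}) := by
    intro c _ d _ hcd
    refine Set.disjoint_left.mpr (fun ω h1 h2 => hcd ?_)
    obtain ⟨e1, e2⟩ := h1; obtain ⟨f1, f2⟩ := h2
    exact Prod.ext (by rw [← e1, ← f1]) (by rw [← e2, ← f2])
  have hmeas : ∀ c ∈ (univ : Finset (S × S)).filter (fun c => Q c.1 c.2),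
      MeasurableSet {ω | x t ω = c.1 ∧ x (t + 1) ω = c.2} := by
    intro c _
    have : {ω | x t ω = c.1 ∧ x (t + 1) ω = c.2}
        = {ω | x t ω = c.1} ∩ {ω | x (t+1) ω = c.2} := rfl
    rw [this]
    exact (state_measurable h.1 t c.1).inter (state_measurable h.1 (t+1) c.2)
  rw [hdec, measure_biUnion_finset hdisj hmeas]
  rw [Finset.sum_filter]
  exact Finset.sum_congr rfl (fun c _ => by
    by_cases hc : Q c.1 c.2
    · rw [if_pos hc, if_pos hc, pair_measure h t c.1 c.2]
    · rw [if_neg hc, if_neg hc])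

lemma dist_recur (h : IsMarkovProcess μ x init K) (t : ℕ) (b : S) :
    μ {ω | x (t + 1) ω = b} = ∑ a : S, μ {ω | x t ω = a} * ENNReal.ofReal (K a b) := by
  classical
  have : {ω | x (t+1) ω = b} = {ω | (fun _ c => c = b) (x t ω) (x (t+1) ω)} := rfl
  rw [this, level_measure h t (fun _ c => c = b)]
  rw [Fintype.sum_prod_type]
  exact Finset.sum_congr rfl (fun a _ => by simp)

end Markov

section Unif
variable {n : ℕ} {p : ℝ}

lemma lo_uniformity {Ω : Type*} [MeasurableSpace Ω] {μ : Measure Ω}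
    {x : ℕ → Ω → Fin n → Bool}
    (hchain : IsMarkovProcess μ x (fun _ => 1 / 2 ^ n)
      (eaKernel n (leadingOnes n) (sbmProb n p)))
    (t : ℕ) (b b' : Fin n → Bool) (hbb : leadingOnes n b = leadingOnes n b') :
    μ {ω | x t ω = b} = μ {ω | x t ω = b'} := by
  classical
  induction t generalizing b b' with
  | zero => rw [hchain.2.1 b, hchain.2.1 b']
  | succ t ih =>
    rw [dist_recur hchain t b, dist_recur hchain t b']
    set j := leadingOnes n b' with hj
    have hjb : leadingOnes n b = j := hbb
    have hjn : j ≤ n := leadingOnes_le b'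
    obtain ⟨hb1, hb2⟩ := leadingOnes_spec b
    obtain ⟨hb1', hb2'⟩ := leadingOnes_spec b'
    have hbb' : ∀ k : Fin n, (k : ℕ) ≤ j → b k = b' k := by
      intro k hk
      rcases lt_or_eq_of_le hk with hk' | hk'
      · rw [hb1 k (by rw [hjb]; exact hk'), hb1' k (by rw [← hj]; exact hk')]
      · have hkn : j < n := by rw [← hk']; exact k.isLt
        have hkeq : k = ⟨j, hkn⟩ := Fin.ext hk'
        rw [hkeq]
        have e1 : b ⟨j, hkn⟩ = false := by
          have := hb2 (by rw [hjb]; exact hkn)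
          convert this using 2
          exact Fin.ext hjb.symm
        have e2 : b' ⟨j, hkn⟩ = false := by
          exact hb2' hkn
        rw [e1, e2]
    set σ : (Fin n → Bool) → (Fin n → Bool) := fun a k => if b k = b' k then a k else !(a k)
      with hσ
    have hσσ : Function.Involutive σ := by
      intro a; funext k; simp only [hσ]
      by_cases h : b k = b' k <;> simp [h]
    have hσbij : Function.Bijective σ := hσσ.bijective
    have hσfix : ∀ a (k : Fin n), (k : ℕ) ≤ j → σ a k = a k := by
      intro a k hk; simp only [hσ]; rw [if_pos (hbb' k hk)]
    have hσb : σ b = b' := by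
      funext k; simp only [hσ]
      by_cases h : b k = b' k
      · rw [if_pos h]; exact h
      · rw [if_neg h]
        cases hbk : b k <;> cases hbk' : b' k <;> simp_all
    have hsbm : ∀ a c, sbmProb n p (σ a) (σ c) = sbmProb n p a c := by
      intro a c
      have hd : hammingDist (σ a) (σ c) = hammingDist a c := by
        unfold hammingDist
        congr 1
        apply Finset.filter_congr
        intro k _
        simp only [hσ]
        by_cases h : b k = b' k
        · rw [if_pos h, if_pos h]
        · rw [if_neg h, if_neg h]
          cases a k <;> cases c k <;> simp
      rw [sbmProb, sbmProb, hd]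
    have hLOσ : ∀ a, leadingOnes n a ≤ j → leadingOnes n (σ a) = leadingOnes n a := by
      intro a hle
      obtain ⟨ha1, ha2⟩ := leadingOnes_spec a
      rw [leadingOnes_eq_iff _ _ (leadingOnes_le a)]
      constructor
      · intro k hk
        rw [hσfix a k (le_trans (le_of_lt hk) hle)]
        exact ha1 k hk
      · intro h
        rw [hσfix a _ (by simpa using hle)]
        exact ha2 h
    have hLOσ' : ∀ a, j < leadingOnes n a → j < leadingOnes n (σ a) := by
      intro a hlt
      have hjn' : j < n := lt_of_lt_of_le hlt (leadingOnes_le a)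
      rw [lt_leadingOnes_iff _ _ hjn']
      intro k hk
      rw [hσfix a k hk]
      exact (lt_leadingOnes_iff a j hjn').mp hlt k hk
    have hLOiff : ∀ y, (leadingOnes n (σ y) < j ↔ leadingOnes n y < j) := by
      intro y
      by_cases h : leadingOnes n y ≤ j
      · rw [hLOσ y h]
      · push_neg at h
        constructor
        · intro h2; exact absurd (hLOσ' y h) (by omega)
        · intro h2; omega
    rw [← Function.Bijective.sum_comp hσbij
      (fun a => μ {ω | x t ω = a} * ENNReal.ofReal (eaKernel n (leadingOnes n) (sbmProb n p) a b'))]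
    apply Finset.sum_congr rfl
    intro a _
    by_cases hLO : leadingOnes n a ≤ j
    · have hda : μ {ω | x t ω = σ a} = μ {ω | x t ω = a} := ih (σ a) a (hLOσ a hLO)
      rw [hda]
      congr 2
      have hLOa : leadingOnes n (σ a) = leadingOnes n a := hLOσ a hLO
      unfold eaKernel
      congr 1
      · rw [if_pos (show leadingOnes n a ≤ leadingOnes n b by rw [hjb]; exact hLO), if_pos (show leadingOnes n (σ a) ≤ leadingOnes n b' by rw [hLOa, ← hj]; exact hLO)]
        rw [← hσb, hsbm]
      · have hiff : (b' = σ a) ↔ (b = a) := by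
          rw [← hσb]
          exact ⟨fun h => hσσ.injective h, fun h => by rw [h]⟩
        by_cases hba : b = a
        · rw [if_pos hba, if_pos (hiff.mpr hba)]
          have hσab' : σ a = b' := by rw [← hba, hσb]
          rw [hσab']
          have hLOa' : leadingOnes n a = j := by rw [← hba]; exact hjb
          rw [Finset.sum_filter, Finset.sum_filter]
          rw [← Function.Bijective.sum_comp hσbij
            (fun y => if leadingOnes n y < leadingOnes n b' then sbmProb n p b' y else 0)]
          apply Finset.sum_congr rfl
          intro y _
          have c1 : (leadingOnes n (σ y) < leadingOnes n b')
              ↔ (leadingOnes n y < leadingOnes n a) := by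
            rw [← hj, hLOa']
            exact hLOiff y
          have c2 : sbmProb n p b' (σ y) = sbmProb n p a y := by
            rw [← hσb, hsbm, hba]
          exact (if_congr c1 c2 rfl).symm
        · rw [if_neg hba, if_neg (fun h => hba (hiff.mp h))]
    · push_neg at hLO
      have h1 : eaKernel n (leadingOnes n) (sbmProb n p) a b = 0 := by
        unfold eaKernel
        rw [if_neg (show ¬ leadingOnes n a ≤ leadingOnes n b by rw [hjb]; omega), if_neg (show ¬ b = a by intro h; rw [h] at hjb; omega)]
        ring
      have h2 : eaKernel n (leadingOnes n) (sbmProb n p) (σ a) b' = 0 := by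
        have := hLOσ' a hLO
        unfold eaKernel
        rw [if_neg (show ¬ leadingOnes n (σ a) ≤ leadingOnes n b' by rw [← hj]; omega), if_neg (show ¬ b' = σ a by intro h; rw [h] at hj; omega)]
        ring
      rw [h1, h2]
      simp

end Unif

section Kern
variable {n : ℕ} {p : ℝ}

lemma eaKernel_nonneg (hp0 : 0 ≤ p) (hp1 : p ≤ 1) (f : (Fin n → Bool) → ℕ)
    (a b : Fin n → Bool) : 0 ≤ eaKernel n f (sbmProb n p) a b := by
  unfold eaKernel
  apply add_nonneg
  · split_ifs
    · exact sbmProb_nonneg hp0 hp1 a b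
    · exact le_rfl
  · split_ifs
    · exact Finset.sum_nonneg (fun y _ => sbmProb_nonneg hp0 hp1 a y)
    · exact le_rfl

lemma eaKernel_self_ge (hp0 : 0 ≤ p) (hp1 : p ≤ 1) (f : (Fin n → Bool) → ℕ)
    (a : Fin n → Bool) : (1 - p) ^ n ≤ eaKernel n f (sbmProb n p) a a := by
  unfold eaKernel
  rw [if_pos le_rfl, if_pos rfl]
  have h1 : sbmProb n p a a = (1 - p) ^ n := by
    rw [sbmProb, hammingDist_self, pow_zero, one_mul, Nat.sub_zero]
  have h2 : (0:ℝ) ≤ ∑ y ∈ Finset.univ.filter (fun y => f y < f a), sbmProb n p a y :=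
    Finset.sum_nonneg (fun y _ => sbmProb_nonneg hp0 hp1 a y)
  linarith

lemma lo_dist_pos (hp0 : 0 < p) (hp1 : p < 1)
    {Ω : Type*} [MeasurableSpace Ω] {μ : Measure Ω}
    {x : ℕ → Ω → Fin n → Bool}
    (hchain : IsMarkovProcess μ x (fun _ => 1 / 2 ^ n)
      (eaKernel n (leadingOnes n) (sbmProb n p)))
    (t : ℕ) (a : Fin n → Bool) : μ {ω | x t ω = a} ≠ 0 := by
  classical
  induction t with
  | zero =>
    rw [hchain.2.1 a]
    simp only [ne_eq, ENNReal.ofReal_eq_zero, not_le]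
    positivity
  | succ t ih =>
    rw [dist_recur hchain t a]
    intro h
    rw [Finset.sum_eq_zero_iff] at h
    have := h a (Finset.mem_univ a)
    rcases mul_eq_zero.mp this with h' | h'
    · exact ih h'
    · rw [ENNReal.ofReal_eq_zero] at h'
      have h1 := eaKernel_self_ge (le_of_lt hp0) (le_of_lt hp1) (leadingOnes n) a
      have h2 : (0:ℝ) < (1 - p) ^ n := by
        have : (0:ℝ) < 1 - p := by linarith
        positivity
      linarith

end Kern

section RealSum
variable {n : ℕ} {p : ℝ}

lemma real_sum_num (hp0 : 0 ≤ p) (hp1 : p ≤ 1) {i j : ℕ} (hij : i < j) (hjn : j ≤ n) :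
    ∑ a : Fin n → Bool, (if leadingOnes n a = i then
        (∑ b : Fin n → Bool, if leadingOnes n b = j then sbmProb n p a b else 0) else 0)
      = (1 - p) ^ i * p * (if j < n then (2:ℝ) ^ (n - j - 1) else 1) := by
  classical
  have hin : i < n := lt_of_lt_of_le hij hjn
  set OkJ : Fin n → Bool → Prop :=
    fun k v => ((k : ℕ) < j → v = true) ∧ ((k : ℕ) = j → v = false) with hOkJ
  have hJ : ∀ b : Fin n → Bool, (leadingOnes n b = j) ↔ (∀ k, OkJ k (b k)) := by
    intro b
    rw [leadingOnes_eq_iff b j hjn]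
    constructor
    · rintro ⟨h1, h2⟩ k
      refine ⟨fun hk => h1 k hk, fun hk => ?_⟩
      have hkn : j < n := hk ▸ k.isLt
      have : k = ⟨j, hkn⟩ := Fin.ext hk
      rw [this]; exact h2 hkn
    · intro h
      exact ⟨fun k hk => (h k).1 hk, fun hn => (h ⟨j, hn⟩).2 rfl⟩
  set F : Fin n → Bool → ℝ := fun k v =>
    if (k : ℕ) < j then (if v = true then 1 - p else p)
    else if (k : ℕ) = j then (if v = false then 1 - p else p) else 1 with hF
  have hinner : ∀ a : Fin n → Bool,
      (∑ b : Fin n → Bool, if leadingOnes n b = j then sbmProb n p a b else 0)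
        = ∏ k, F k (a k) := by
    intro a
    have : ∀ b : Fin n → Bool, (if leadingOnes n b = j then sbmProb n p a b else 0)
        = (if (∀ k, OkJ k (b k)) then sbmProb n p a b else 0) := by
      intro b; rw [if_congr (hJ b) rfl rfl]
    simp only [this]
    rw [sum_sbm p a OkJ]
    apply Finset.prod_congr rfl
    intro k _
    rcases lt_trichotomy ((k : ℕ)) j with hk | hk | hk
    · have h1 : ¬ OkJ k false := by
        intro h; have := h.1 hk; simp at this
      have h2 : OkJ k true := ⟨fun _ => rfl, fun h => absurd h (by omega)⟩
      rw [if_neg h1, if_pos h2, hF]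
      simp only [if_pos hk]
      rw [zero_add]
    · have h1 : OkJ k false := ⟨fun h => absurd h (by omega), fun _ => rfl⟩
      have h2 : ¬ OkJ k true := by
        intro h; have := h.2 hk; simp at this
      rw [if_pos h1, if_neg h2, hF]
      simp only [if_neg (by omega : ¬ (k:ℕ) < j), if_pos hk]
      rw [add_zero]
    · have h1 : OkJ k false := ⟨fun h => absurd h (by omega), fun h => absurd h (by omega)⟩
      have h2 : OkJ k true := ⟨fun h => absurd h (by omega), fun h => absurd h (by omega)⟩
      rw [if_pos h1, if_pos h2, hF]
      simp only [if_neg (by omega : ¬ (k:ℕ) < j), if_neg (by omega : ¬ (k:ℕ) = j)]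
      cases hv : a k <;> simp <;> ring
  simp only [hinner]
  set OkI : Fin n → Bool → Prop :=
    fun k v => ((k : ℕ) < i → v = true) ∧ ((k : ℕ) = i → v = false) with hOkI
  have hI : ∀ a : Fin n → Bool, (leadingOnes n a = i) ↔ (∀ k, OkI k (a k)) := by
    intro a
    rw [leadingOnes_eq_iff a i (le_of_lt hin)]
    constructor
    · rintro ⟨h1, h2⟩ k
      refine ⟨fun hk => h1 k hk, fun hk => ?_⟩
      have hkn : i < n := hk ▸ k.isLt
      have : k = ⟨i, hkn⟩ := Fin.ext hk
      rw [this]; exact h2 hkn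
    · intro h
      exact ⟨fun k hk => (h k).1 hk, fun hn => (h ⟨i, hn⟩).2 rfl⟩
  have hcond : ∀ a : Fin n → Bool, (if leadingOnes n a = i then ∏ k, F k (a k) else 0)
      = (if (∀ k, OkI k (a k)) then ∏ k, F k (a k) else 0) := by
    intro a; rw [if_congr (hI a) rfl rfl]
  simp only [hcond]
  rw [sum_prod_bool OkI F]
  -- evaluate the product
  set G : ℕ → ℝ := fun m =>
    if m < i then 1 - p else if m = i then p else if m ≤ j then 1 else 2 with hG
  have hGk : ∀ k : Fin n,
      ((if OkI k false then F k false else 0) + (if OkI k true then F k true else 0))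
        = G (k : ℕ) := by
    intro k
    rcases lt_trichotomy ((k : ℕ)) i with hk | hk | hk
    · have h1 : ¬ OkI k false := by intro h; have := h.1 hk; simp at this
      have h2 : OkI k true := ⟨fun _ => rfl, fun h => absurd h (by omega)⟩
      rw [if_neg h1, if_pos h2, hF, hG]
      simp only [if_pos (by omega : (k:ℕ) < j), if_pos hk]
      simp
    · have h1 : OkI k false := ⟨fun h => absurd h (by omega), fun _ => rfl⟩
      have h2 : ¬ OkI k true := by intro h; have := h.2 hk; simp at this
      rw [if_pos h1, if_neg h2, hF, hG]
      simp only [if_pos (by omega : (k:ℕ) < j), if_neg (by omega : ¬ (k:ℕ) < i), if_pos hk]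
      simp
    · have h1 : OkI k false := ⟨fun h => absurd h (by omega), fun h => absurd h (by omega)⟩
      have h2 : OkI k true := ⟨fun h => absurd h (by omega), fun h => absurd h (by omega)⟩
      rw [if_pos h1, if_pos h2, hF, hG]
      simp only [if_neg (by omega : ¬ (k:ℕ) < i), if_neg (by omega : ¬ (k:ℕ) = i)]
      rcases lt_trichotomy ((k : ℕ)) j with hkj | hkj | hkj
      · simp only [if_pos hkj, if_pos (le_of_lt hkj)]
        ring_nf
        simp
      · simp only [if_neg (by omega : ¬ (k:ℕ) < j), if_pos hkj, if_pos (le_of_eq hkj)]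
        ring_nf
        simp
      · simp only [if_neg (by omega : ¬ (k:ℕ) < j), if_neg (by omega : ¬ (k:ℕ) = j),
          if_neg (by omega : ¬ (k:ℕ) ≤ j)]
        norm_num
  rw [Finset.prod_congr rfl (fun k _ => hGk k)]
  have hrange : ∏ k : Fin n, G (k : ℕ) = ∏ m ∈ Finset.range n, G m :=
    Fin.prod_univ_eq_prod_range G n
  rw [hrange]
  rw [prod_split i j hij hjn G (1-p) p 1
    (fun k hk => by simp only [hG]; rw [if_pos hk])
    (by simp [hG])
    (fun k hk1 hk2 => by
      simp only [hG]
      rw [if_neg (by omega), if_neg (by omega), if_pos (by omega)])]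
  rw [one_pow, mul_one]
  congr 1
  by_cases hj : j < n
  · rw [if_pos hj]
    rw [← Finset.prod_Ico_consecutive G (by omega : j ≤ j + 1) (by omega : j + 1 ≤ n)]
    rw [prod_range_const_of j (j+1) G 1 (fun k hk1 hk2 => by
      simp only [hG]; rw [if_neg (by omega), if_neg (by omega), if_pos (by omega)])]
    rw [prod_range_const_of (j+1) n G 2 (fun k hk1 hk2 => by
      simp only [hG]; rw [if_neg (by omega), if_neg (by omega), if_neg (by omega)])]
    rw [one_pow, one_mul, Nat.sub_sub]
  · rw [if_neg hj]
    have : j = n := by omega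
    rw [this, Finset.Ico_self, Finset.prod_empty]

lemma real_sum_den (hp0 : 0 ≤ p) (hp1 : p ≤ 1) {i : ℕ} (hin : i < n) :
    ∑ a : Fin n → Bool, (if leadingOnes n a = i then
        (∑ b : Fin n → Bool, if i < leadingOnes n b then sbmProb n p a b else 0) else 0)
      = (1 - p) ^ i * p * (2:ℝ) ^ (n - i - 1) := by
  classical
  set OkD : Fin n → Bool → Prop := fun k v => ((k : ℕ) ≤ i → v = true) with hOkD
  have hD : ∀ b : Fin n → Bool, (i < leadingOnes n b) ↔ (∀ k, OkD k (b k)) := by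
    intro b
    rw [lt_leadingOnes_iff b i hin]
  set F : Fin n → Bool → ℝ := fun k v =>
    if (k : ℕ) ≤ i then (if v = true then 1 - p else p) else 1 with hF
  have hinner : ∀ a : Fin n → Bool,
      (∑ b : Fin n → Bool, if i < leadingOnes n b then sbmProb n p a b else 0)
        = ∏ k, F k (a k) := by
    intro a
    have : ∀ b : Fin n → Bool, (if i < leadingOnes n b then sbmProb n p a b else 0)
        = (if (∀ k, OkD k (b k)) then sbmProb n p a b else 0) := by
      intro b; rw [if_congr (hD b) rfl rfl]
    simp only [this]
    rw [sum_sbm p a OkD]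
    apply Finset.prod_congr rfl
    intro k _
    by_cases hk : (k : ℕ) ≤ i
    · have h1 : ¬ OkD k false := by intro h; have := h hk; simp at this
      have h2 : OkD k true := fun _ => rfl
      rw [if_neg h1, if_pos h2, hF]
      simp only [if_pos hk]
      rw [zero_add]
    · have h1 : OkD k false := fun h => absurd h hk
      have h2 : OkD k true := fun h => absurd h hk
      rw [if_pos h1, if_pos h2, hF]
      simp only [if_neg hk]
      cases hv : a k <;> simp <;> ring
  simp only [hinner]
  set OkI : Fin n → Bool → Prop :=
    fun k v => ((k : ℕ) < i → v = true) ∧ ((k : ℕ) = i → v = false) with hOkI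
  have hI : ∀ a : Fin n → Bool, (leadingOnes n a = i) ↔ (∀ k, OkI k (a k)) := by
    intro a
    rw [leadingOnes_eq_iff a i (le_of_lt hin)]
    constructor
    · rintro ⟨h1, h2⟩ k
      refine ⟨fun hk => h1 k hk, fun hk => ?_⟩
      have hkn : i < n := hk ▸ k.isLt
      have : k = ⟨i, hkn⟩ := Fin.ext hk
      rw [this]; exact h2 hkn
    · intro h
      exact ⟨fun k hk => (h k).1 hk, fun hn => (h ⟨i, hn⟩).2 rfl⟩
  have hcond : ∀ a : Fin n → Bool, (if leadingOnes n a = i then ∏ k, F k (a k) else 0)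
      = (if (∀ k, OkI k (a k)) then ∏ k, F k (a k) else 0) := by
    intro a; rw [if_congr (hI a) rfl rfl]
  simp only [hcond]
  rw [sum_prod_bool OkI F]
  set G : ℕ → ℝ := fun m => if m < i then 1 - p else if m = i then p else 2 with hG
  have hGk : ∀ k : Fin n,
      ((if OkI k false then F k false else 0) + (if OkI k true then F k true else 0))
        = G (k : ℕ) := by
    intro k
    rcases lt_trichotomy ((k : ℕ)) i with hk | hk | hk
    · have h1 : ¬ OkI k false := by intro h; have := h.1 hk; simp at this
      have h2 : OkI k true := ⟨fun _ => rfl, fun h => absurd h (by omega)⟩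
      rw [if_neg h1, if_pos h2, hF, hG]
      simp only [if_pos (by omega : (k:ℕ) ≤ i), if_pos hk]
      simp
    · have h1 : OkI k false := ⟨fun h => absurd h (by omega), fun _ => rfl⟩
      have h2 : ¬ OkI k true := by intro h; have := h.2 hk; simp at this
      rw [if_pos h1, if_neg h2, hF, hG]
      simp only [if_pos (by omega : (k:ℕ) ≤ i), if_neg (by omega : ¬ (k:ℕ) < i), if_pos hk]
      simp
    · have h1 : OkI k false := ⟨fun h => absurd h (by omega), fun h => absurd h (by omega)⟩
      have h2 : OkI k true := ⟨fun h => absurd h (by omega), fun h => absurd h (by omega)⟩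
      rw [if_pos h1, if_pos h2, hF, hG]
      simp only [if_neg (by omega : ¬ (k:ℕ) ≤ i), if_neg (by omega : ¬ (k:ℕ) < i),
        if_neg (by omega : ¬ (k:ℕ) = i)]
      norm_num
  rw [Finset.prod_congr rfl (fun k _ => hGk k)]
  rw [Fin.prod_univ_eq_prod_range G n]
  rw [prod_split i (i+1) (by omega) (by omega) G (1-p) p 1
    (fun k hk => by simp only [hG]; rw [if_pos hk])
    (by simp [hG])
    (fun k hk1 hk2 => absurd hk1 (by omega))]
  rw [one_pow, mul_one]
  congr 1
  rw [prod_range_const_of (i+1) n G 2 (fun k hk1 hk2 => by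
    simp only [hG]; rw [if_neg (by omega), if_neg (by omega)])]
  rw [Nat.sub_sub]

end RealSum

open ProbabilityTheory in
/-- For the (1+1) EA with mutation probability `p ∈ (0,1)` on LeadingOnes with uniformly
random initialization: for every `t` and all `0 ≤ i < j ≤ n`, the conditional probability that
`LO(x_{t+1}) = j`, given `LO(x_t) = i` and `LO(x_{t+1}) > i`, equals `2^{i−j}` if `j < n`
and `2^{i−j+1}` if `j = n`. -/
theorem oneplusoneEA_leadingOnes_level_transition
    (n : ℕ) (p : ℝ) (hp0 : 0 < p) (hp1 : p < 1)
    {Ω : Type*} [MeasurableSpace Ω] (μ : Measure Ω) [IsProbabilityMeasure μ]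
    (x : ℕ → Ω → Fin n → Bool)
    (hchain : IsMarkovProcess μ x (fun _ => 1 / 2 ^ n)
      (eaKernel n (leadingOnes n) (sbmProb n p)))
    (t : ℕ) (i j : ℕ) (hij : i < j) (hjn : j ≤ n) :
    (μ[|{ω | leadingOnes n (x t ω) = i ∧ i < leadingOnes n (x (t + 1) ω)}])
        {ω | leadingOnes n (x (t + 1) ω) = j}
      = ENNReal.ofReal
          (if j < n then (2 : ℝ) ^ ((i : ℤ) - (j : ℤ))
           else (2 : ℝ) ^ ((i : ℤ) - (j : ℤ) + 1)) := by
  classical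
  have hx := hchain.1
  have hin : i < n := lt_of_lt_of_le hij hjn
  set KK := eaKernel n (leadingOnes n) (sbmProb n p) with hKK
  set A := {ω | leadingOnes n (x t ω) = i ∧ i < leadingOnes n (x (t + 1) ω)} with hA
  set B := {ω | leadingOnes n (x (t + 1) ω) = j} with hB
  have hAmeas : MeasurableSet A := by
    have : A = (x t) ⁻¹' {a | leadingOnes n a = i}
        ∩ (x (t+1)) ⁻¹' {a | i < leadingOnes n a} := rfl
    rw [this]
    exact ((hx t) (Set.Finite.measurableSet (Set.toFinite _))).inter
      ((hx (t+1)) (Set.Finite.measurableSet (Set.toFinite _)))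
  rw [ProbabilityTheory.cond_apply hAmeas]
  have hABset : A ∩ B = {ω | leadingOnes n (x t ω) = i ∧ leadingOnes n (x (t+1) ω) = j} := by
    ext ω
    simp only [hA, hB, Set.mem_inter_iff, Set.mem_setOf_eq]
    constructor
    · rintro ⟨⟨u1, _⟩, u3⟩; exact ⟨u1, u3⟩
    · rintro ⟨u1, u2⟩; exact ⟨⟨u1, by omega⟩, u2⟩
  -- canonical state at level i
  set a₀ : Fin n → Bool := fun k => decide ((k : ℕ) < i) with ha₀def
  have ha₀ : leadingOnes n a₀ = i := by
    rw [leadingOnes_eq_iff a₀ i (le_of_lt hin)]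
    constructor
    · intro k hk; simp [ha₀def, hk]
    · intro h; simp [ha₀def]
  set d₀ : ENNReal := μ {ω | x t ω = a₀} with hd₀def
  have hp0' : (0:ℝ) ≤ p := le_of_lt hp0
  have hp1' : p ≤ 1 := le_of_lt hp1
  have hKnn : ∀ a b : Fin n → Bool, 0 ≤ KK a b := fun a b =>
    eaKernel_nonneg hp0' hp1' (leadingOnes n) a b
  -- generic collapse
  have collapse : ∀ (Q : (Fin n → Bool) → Prop) (_ : ∀ b, Decidable (Q b)),
      (∑ c : (Fin n → Bool) × (Fin n → Bool),
        (if leadingOnes n c.1 = i ∧ Q c.2 then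
          μ {ω | x t ω = c.1} * ENNReal.ofReal (KK c.1 c.2) else 0))
      = d₀ * ENNReal.ofReal (∑ a : Fin n → Bool, (if leadingOnes n a = i then
          (∑ b : Fin n → Bool, if Q b then KK a b else 0) else 0)) := by
    intro Q instQ
    have step1 : ∀ c : (Fin n → Bool) × (Fin n → Bool),
        (if leadingOnes n c.1 = i ∧ Q c.2 then
            μ {ω | x t ω = c.1} * ENNReal.ofReal (KK c.1 c.2) else 0)
          = d₀ * ENNReal.ofReal (if leadingOnes n c.1 = i ∧ Q c.2 then KK c.1 c.2 else 0) := by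
      intro c
      by_cases h : leadingOnes n c.1 = i ∧ Q c.2
      · rw [if_pos h, if_pos h, hd₀def,
          lo_uniformity hchain t c.1 a₀ (by rw [h.1, ha₀])]
      · rw [if_neg h, if_neg h]
        simp
    rw [Finset.sum_congr rfl (fun c _ => step1 c), ← Finset.mul_sum]
    congr 1
    rw [← ENNReal.ofReal_sum_of_nonneg (fun c _ => by
      split_ifs with h
      · exact hKnn c.1 c.2
      · exact le_rfl)]
    congr 1
    rw [Fintype.sum_prod_type]
    apply Finset.sum_congr rfl
    intro a _
    by_cases ha : leadingOnes n a = i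
    · rw [if_pos ha]
      apply Finset.sum_congr rfl
      intro b _
      by_cases hb : Q b
      · rw [if_pos ⟨ha, hb⟩, if_pos hb]
      · rw [if_neg (fun h => hb h.2), if_neg hb]
    · rw [if_neg ha]
      exact Finset.sum_eq_zero (fun b _ => if_neg (fun h => ha h.1))
  -- kernel reduces to sbmProb on improving transitions
  have hK_num : ∀ a b : Fin n → Bool, leadingOnes n a = i → leadingOnes n b = j →
      KK a b = sbmProb n p a b := by
    intro a b ha hb
    rw [hKK]
    unfold eaKernel
    rw [if_pos (show leadingOnes n a ≤ leadingOnes n b by rw [ha, hb]; omega), if_neg (show ¬ b = a by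
      intro h; rw [h, ha] at hb; omega), add_zero]
  have hK_den : ∀ a b : Fin n → Bool, leadingOnes n a = i → i < leadingOnes n b →
      KK a b = sbmProb n p a b := by
    intro a b ha hb
    rw [hKK]
    unfold eaKernel
    rw [if_pos (show leadingOnes n a ≤ leadingOnes n b by rw [ha]; omega), if_neg (show ¬ b = a by
      intro h; rw [h, ha] at hb; omega), add_zero]
  -- numerator
  have hnum : μ (A ∩ B)
      = d₀ * ENNReal.ofReal ((1 - p) ^ i * p * (if j < n then (2:ℝ) ^ (n - j - 1) else 1)) := by
    rw [hABset, level_measure hchain t (fun a b => leadingOnes n a = i ∧ leadingOnes n b = j)]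
    rw [collapse (fun b => leadingOnes n b = j) (fun b => inferInstance)]
    congr 1
    rw [← real_sum_num hp0' hp1' hij hjn]
    congr 1
    apply Finset.sum_congr rfl
    intro a _
    by_cases ha : leadingOnes n a = i
    · rw [if_pos ha, if_pos ha]
      apply Finset.sum_congr rfl
      intro b _
      by_cases hb : leadingOnes n b = j
      · rw [if_pos hb, if_pos hb, hK_num a b ha hb]
      · rw [if_neg hb, if_neg hb]
    · rw [if_neg ha, if_neg ha]
  -- denominator
  have hden : μ A
      = d₀ * ENNReal.ofReal ((1 - p) ^ i * p * (2:ℝ) ^ (n - i - 1)) := by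
    have : A = {ω | (fun a b => leadingOnes n a = i ∧ i < leadingOnes n b)
        (x t ω) (x (t+1) ω)} := rfl
    rw [this, level_measure hchain t (fun a b => leadingOnes n a = i ∧ i < leadingOnes n b)]
    rw [collapse (fun b => i < leadingOnes n b) (fun b => inferInstance)]
    congr 1
    rw [← real_sum_den hp0' hp1' hin]
    congr 1
    apply Finset.sum_congr rfl
    intro a _
    by_cases ha : leadingOnes n a = i
    · rw [if_pos ha, if_pos ha]
      apply Finset.sum_congr rfl
      intro b _
      by_cases hb : i < leadingOnes n b
      · rw [if_pos hb, if_pos hb, hK_den a b ha hb]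
      · rw [if_neg hb, if_neg hb]
    · rw [if_neg ha, if_neg ha]
  rw [hnum, hden]
  -- final computation in ENNReal
  have hd0 : d₀ ≠ 0 := lo_dist_pos hp0 hp1 hchain t a₀
  have hdtop : d₀ ≠ ⊤ := measure_ne_top μ _
  have h1p : (0:ℝ) < 1 - p := by linarith
  have hα : (0:ℝ) < (1 - p) ^ i * p * (2:ℝ) ^ (n - i - 1) := by positivity
  rw [ENNReal.mul_inv (Or.inl hd0) (Or.inl hdtop)]
  rw [mul_mul_mul_comm, ENNReal.inv_mul_cancel hd0 hdtop, one_mul]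
  rw [← ENNReal.ofReal_inv_of_pos hα, ← ENNReal.ofReal_mul (by positivity)]
  congr 1
  have hsplit : ((1 - p) ^ i * p * (2:ℝ) ^ (n - i - 1))⁻¹
      * ((1 - p) ^ i * p * (if j < n then (2:ℝ) ^ (n - j - 1) else 1))
      = (if j < n then (2:ℝ) ^ (n - j - 1) else 1) * ((2:ℝ) ^ (n - i - 1))⁻¹ := by
    have hw : ((1 - p) ^ i * p) ≠ 0 := by positivity
    field_simp
  rw [hsplit]
  by_cases hj : j < n
  · rw [if_pos hj, if_pos hj]
    have hexp : ((n - j - 1 : ℕ) : ℤ) - ((n - i - 1 : ℕ) : ℤ) = (i : ℤ) - (j : ℤ) := by omega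
    calc (2:ℝ) ^ (n - j - 1) * ((2:ℝ) ^ (n - i - 1))⁻¹
        = (2:ℝ) ^ ((n - j - 1 : ℕ) : ℤ) * ((2:ℝ) ^ ((n - i - 1 : ℕ) : ℤ))⁻¹ := by
          rw [zpow_natCast, zpow_natCast]
      _ = (2:ℝ) ^ (((n - j - 1 : ℕ) : ℤ) - ((n - i - 1 : ℕ) : ℤ)) := by
          rw [← div_eq_mul_inv, ← zpow_sub₀ (by norm_num : (2:ℝ) ≠ 0)]
      _ = (2:ℝ) ^ ((i : ℤ) - (j : ℤ)) := by rw [hexp]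
  · rw [if_neg hj, if_neg hj, one_mul]
    have hjn' : j = n := by omega
    have hexp : -((n - i - 1 : ℕ) : ℤ) = (i : ℤ) - (j : ℤ) + 1 := by omega
    calc ((2:ℝ) ^ (n - i - 1))⁻¹
        = ((2:ℝ) ^ ((n - i - 1 : ℕ) : ℤ))⁻¹ := by rw [zpow_natCast]
      _ = (2:ℝ) ^ (-((n - i - 1 : ℕ) : ℤ)) := by rw [zpow_neg]
      _ = (2:ℝ) ^ ((i : ℤ) - (j : ℤ) + 1) := by rw [hexp]
end

section
/- For every n ∈ ℕ, ∑_{i=0}^n ( C(n,i) · H_i ) / 2^n = H_n − ∑_{j=1}^n 1/(j · 2^j), where C(n,i) is the binomial coefficient. -/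
/-- The `i`-th harmonic number `H_i = ∑_{l=1}^i 1/l`, with `H_0 = 0`. -/
noncomputable def harm (i : ℕ) : ℝ := ∑ j ∈ Finset.range i, 1 / ((j : ℝ) + 1)

lemma harm_succ (i : ℕ) : harm (i + 1) = harm i + 1 / ((i : ℝ) + 1) := by
  simp [harm, Finset.sum_range_succ]

lemma aux1 (n : ℕ) :
    ∑ i ∈ Finset.range (n + 1), (n.choose i : ℝ) / ((i : ℝ) + 1)
      = (2 ^ (n + 1) - 1) / ((n : ℝ) + 1) := by
  have key : ∀ i, (n.choose i : ℝ) / ((i : ℝ) + 1)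
      = ((n + 1).choose (i + 1) : ℝ) / ((n : ℝ) + 1) := by
    intro i
    have h := Nat.add_one_mul_choose_eq n i
    have h' : ((n : ℝ) + 1) * (n.choose i : ℝ) = ((n + 1).choose (i + 1) : ℝ) * ((i : ℝ) + 1) := by
      exact_mod_cast congrArg (Nat.cast (R := ℝ)) h
    have hi : ((i : ℝ) + 1) ≠ 0 := by positivity
    have hn : ((n : ℝ) + 1) ≠ 0 := by positivity
    field_simp
    linarith [h']
  simp_rw [key]
  rw [← Finset.sum_div]
  congr 1
  have h2 : ∑ i ∈ Finset.range (n + 2), ((n + 1).choose i : ℝ) = 2 ^ (n + 1) := by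
    exact_mod_cast congrArg (Nat.cast (R := ℝ)) (Nat.sum_range_choose (n + 1))
  rw [Finset.sum_range_succ'] at h2
  simp at h2
  linarith [h2]

lemma Skey (n : ℕ) :
    ∑ i ∈ Finset.range (n + 1), (n.choose i : ℝ) * harm i
      = 2 ^ n * (harm n - ∑ j ∈ Finset.Icc 1 n, 1 / ((j : ℝ) * 2 ^ j)) := by
  induction n with
  | zero => simp [harm]
  | succ n ih =>
    have h1 : ∑ i ∈ Finset.range (n + 2), ((n + 1).choose i : ℝ) * harm i
        = ∑ i ∈ Finset.range (n + 1), ((n + 1).choose (i + 1) : ℝ) * harm (i + 1) := by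
      rw [Finset.sum_range_succ']; simp [harm]
    have h2 : ∑ i ∈ Finset.range (n + 1), ((n + 1).choose (i + 1) : ℝ) * harm (i + 1)
        = ∑ i ∈ Finset.range (n + 1), ((n.choose i : ℝ) * harm (i + 1)
            + (n.choose (i + 1) : ℝ) * harm (i + 1)) := by
      apply Finset.sum_congr rfl
      intro i _
      rw [Nat.choose_succ_succ]
      push_cast
      ring
    have hB : ∑ i ∈ Finset.range (n + 1), (n.choose (i + 1) : ℝ) * harm (i + 1)
        = ∑ i ∈ Finset.range (n + 1), (n.choose i : ℝ) * harm i := by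
      rw [Finset.sum_range_succ, Finset.sum_range_succ']
      simp [harm, Nat.choose_succ_self]
    have hA : ∑ i ∈ Finset.range (n + 1), (n.choose i : ℝ) * harm (i + 1)
        = (∑ i ∈ Finset.range (n + 1), (n.choose i : ℝ) * harm i)
          + (2 ^ (n + 1) - 1) / ((n : ℝ) + 1) := by
      rw [← aux1 n, ← Finset.sum_add_distrib]
      apply Finset.sum_congr rfl
      intro i _
      rw [harm_succ]
      ring
    have hIcc : ∑ j ∈ Finset.Icc 1 (n + 1), 1 / ((j : ℝ) * 2 ^ j)
        = (∑ j ∈ Finset.Icc 1 n, 1 / ((j : ℝ) * 2 ^ j))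
          + 1 / (((n : ℝ) + 1) * 2 ^ (n + 1)) := by
      rw [Finset.sum_Icc_succ_top (by omega)]
      push_cast
      ring
    rw [h1, h2, Finset.sum_add_distrib, hB, hA, ih, hIcc, harm_succ]
    have hn : ((n : ℝ) + 1) ≠ 0 := by positivity
    have hp : (2 : ℝ) ^ (n + 1) ≠ 0 := by positivity
    field_simp
    ring

/-- For every `n ∈ ℕ`,
`∑_{i=0}^n (C(n,i) · H_i) / 2^n = H_n − ∑_{j=1}^n 1/(j · 2^j)`. -/
theorem weighted_harmonic_sum (n : ℕ) :
    ∑ i ∈ Finset.range (n + 1), ((n.choose i : ℝ) * harm i) / 2 ^ n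
      = harm n - ∑ j ∈ Finset.Icc 1 n, 1 / ((j : ℝ) * 2 ^ j) := by
  rw [← Finset.sum_div, Skey]
  have hp : (2 : ℝ) ^ n ≠ 0 := by positivity
  field_simp
end
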